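/- arXiv:2308.00674 — 8 statements merged into one kernel-verified Lean document; each statement's English description precedes it below -/
import Mathlib

section
/- Every C4-saturated graph on n ≥ 5 vertices has at least ⌊(3n−5)/2⌋ edges. -/
open SimpleGraph Finset

/-- A graph contains a 4-cycle. -/
def HasC4 {V : Type*} (G : SimpleGraph V) : Prop :=
  ∃ a b c d : V, a ≠ b ∧ a ≠ c ∧ a ≠ d ∧ b ≠ c ∧ b ≠ d ∧ c ≠ d ∧
    G.Adj a b ∧ G.Adj b c ∧ G.Adj c d ∧ G.Adj d a

/-- A critical coloring of `G` (for the pair `(C₄, K_{1,k})`) given by its red subgraph `R`: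
the blue subgraph is `G \ R`; there is no red `C₄` and no blue `K_{1,k}`. -/
def CriticalColoring {V : Type*} (k : ℕ) (G R : SimpleGraph V) : Prop :=
  R ≤ G ∧ ¬ HasC4 R ∧ ∀ v : V, ((G \ R).neighborSet v).ncard < k

/-- `G` is `(C₄, K_{1,k})`-co-critical. -/
def CoCritical {V : Type*} (k : ℕ) (G : SimpleGraph V) : Prop :=
  G ≠ ⊤ ∧ (∃ R : SimpleGraph V, CriticalColoring k G R) ∧
    ∀ u v : V, u ≠ v → ¬ G.Adj u v →
      ¬ ∃ R : SimpleGraph V, CriticalColoring k (G ⊔ fromEdgeSet {s(u, v)}) R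

section Aux

variable {V : Type*} {G : SimpleGraph V}

lemma hasC4_of (a b c d : V) (hab : G.Adj a b) (hbc : G.Adj b c) (hcd : G.Adj c d)
    (hda : G.Adj d a) (hac : a ≠ c) (hbd : b ≠ d) : HasC4 G :=
  ⟨a, b, c, d, hab.ne, hac, hda.ne', hbc.ne, hbd, hcd.ne, hab, hbc, hcd, hda⟩

lemma no_two_common (hfree : ¬ HasC4 G) {x y c d : V} (hxy : x ≠ y) (hcd : c ≠ d)
    (h1 : G.Adj x c) (h2 : G.Adj c y) (h3 : G.Adj y d) (h4 : G.Adj d x) : False :=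
  hfree (hasC4_of x c y d h1 h2 h3 h4 hxy hcd)

/-- From saturation: every non-adjacent pair is joined by a path of length 3. -/
lemma sat_P3 (hfree : ¬ HasC4 G)
    (hsat : ∀ u v : V, u ≠ v → ¬ G.Adj u v → HasC4 (G ⊔ SimpleGraph.fromEdgeSet {s(u, v)}))
    {u v : V} (huv : u ≠ v) (hna : ¬ G.Adj u v) :
    ∃ x y, G.Adj u x ∧ G.Adj x y ∧ G.Adj y v ∧ x ≠ y ∧ u ≠ x ∧ u ≠ y ∧ v ≠ x ∧ v ≠ y := by
  obtain ⟨a, b, c, d, hab, hac, had, hbc, hbd, hcd, e1, e2, e3, e4⟩ := hsat u v huv hna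
  have key : ∀ p q : V, (G ⊔ SimpleGraph.fromEdgeSet {s(u, v)}).Adj p q →
      G.Adj p q ∨ ((p = u ∧ q = v) ∨ (p = v ∧ q = u)) := by
    intro p q h
    rcases h with h | h
    · exact Or.inl h
    · rw [SimpleGraph.fromEdgeSet_adj] at h
      have := h.1
      simp only [Set.mem_singleton_iff, Sym2.eq_iff] at this
      exact Or.inr this
  have helper : ∀ p₁ p₂ p₃ p₄ : V,
      ((p₁ = u ∧ p₂ = v) ∨ (p₁ = v ∧ p₂ = u)) →
      G.Adj p₂ p₃ → G.Adj p₃ p₄ → G.Adj p₄ p₁ →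
      p₁ ≠ p₃ → p₂ ≠ p₄ →
      (∃ x y, G.Adj u x ∧ G.Adj x y ∧ G.Adj y v ∧ x ≠ y ∧ u ≠ x ∧ u ≠ y ∧ v ≠ x ∧ v ≠ y) := by
    rintro p₁ p₂ p₃ p₄ (⟨rfl, rfl⟩ | ⟨rfl, rfl⟩) h23 h34 h41 h13 h24
    · exact ⟨p₄, p₃, h41.symm, h34.symm, h23.symm, h34.ne', h41.ne', h13, h24, h23.ne⟩
    · exact ⟨p₃, p₄, h23, h34, h41, h34.ne, h23.ne, h24, h13, h41.ne'⟩
  rcases key _ _ e1 with g1 | n1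
  · rcases key _ _ e2 with g2 | n2
    · rcases key _ _ e3 with g3 | n3
      · rcases key _ _ e4 with g4 | n4
        · exact absurd (hasC4_of a b c d g1 g2 g3 g4 hac hbd) hfree
        · exact helper d a b c n4 g1 g2 g3 hbd.symm hac
      · rcases key _ _ e4 with g4 | n4
        · exact helper c d a b n3 g4 g1 g2 hac.symm hbd.symm
        · exfalso; rcases n3 with ⟨h1', h2'⟩ | ⟨h1', h2'⟩ <;>
            rcases n4 with ⟨h3', h4'⟩ | ⟨h3', h4'⟩ <;> subst_vars <;> simp_all
    · rcases key _ _ e3 with g3 | n3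
      · rcases key _ _ e4 with g4 | n4
        · exact helper b c d a n2 g3 g4 g1 hbd hac.symm
        · exfalso; rcases n2 with ⟨h1', h2'⟩ | ⟨h1', h2'⟩ <;>
            rcases n4 with ⟨h3', h4'⟩ | ⟨h3', h4'⟩ <;> subst_vars <;> simp_all
      · exfalso; rcases n2 with ⟨h1', h2'⟩ | ⟨h1', h2'⟩ <;>
          rcases n3 with ⟨h3', h4'⟩ | ⟨h3', h4'⟩ <;> subst_vars <;> simp_all
  · rcases key _ _ e2 with g2 | n2
    · rcases key _ _ e3 with g3 | n3
      · rcases key _ _ e4 with g4 | n4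
        · exact helper a b c d n1 g2 g3 g4 hac hbd
        · exfalso; rcases n1 with ⟨h1', h2'⟩ | ⟨h1', h2'⟩ <;>
            rcases n4 with ⟨h3', h4'⟩ | ⟨h3', h4'⟩ <;> subst_vars <;> simp_all
      · exfalso; rcases n1 with ⟨h1', h2'⟩ | ⟨h1', h2'⟩ <;>
          rcases n3 with ⟨h3', h4'⟩ | ⟨h3', h4'⟩ <;> subst_vars <;> simp_all
    · exfalso; rcases n1 with ⟨h1', h2'⟩ | ⟨h1', h2'⟩ <;>
        rcases n2 with ⟨h3', h4'⟩ | ⟨h3', h4'⟩ <;> subst_vars <;> simp_all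

end Aux

section Count
variable {V : Type*} [Fintype V] [DecidableEq V]

lemma union3_eq (S A : Finset V) : S ∪ A ∪ (univ \ (S ∪ A)) = univ := by
  rw [Finset.union_sdiff_of_subset (Finset.subset_univ _)]

lemma card_split (S A : Finset V) (hSA : Disjoint S A) (t : Finset V) :
    t.card = (t ∩ S).card + (t ∩ A).card + (t ∩ (univ \ (S ∪ A))).card := by
  have hB : Disjoint (S ∪ A) (univ \ (S ∪ A)) := Finset.disjoint_sdiff
  have h1 : Disjoint (t ∩ S) (t ∩ A) :=
    hSA.mono (Finset.inter_subset_right) (Finset.inter_subset_right)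
  have h2 : Disjoint (t ∩ S ∪ t ∩ A) (t ∩ (univ \ (S ∪ A))) := by
    rw [← Finset.inter_union_distrib_left]
    exact hB.mono (Finset.inter_subset_right) (Finset.inter_subset_right)
  have h3 : t ∩ S ∪ t ∩ A ∪ t ∩ (univ \ (S ∪ A)) = t := by
    rw [← Finset.inter_union_distrib_left, ← Finset.inter_union_distrib_left,
      union3_eq, Finset.inter_univ]
  calc t.card = (t ∩ S ∪ t ∩ A ∪ t ∩ (univ \ (S ∪ A))).card := by rw [h3]
    _ = _ := by rw [Finset.card_union_of_disjoint h2, Finset.card_union_of_disjoint h1]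

lemma sum_split (S A : Finset V) (hSA : Disjoint S A) (f : V → ℕ) :
    ∑ x, f x = ∑ x ∈ S, f x + ∑ x ∈ A, f x + ∑ x ∈ univ \ (S ∪ A), f x := by
  have hB : Disjoint (S ∪ A) (univ \ (S ∪ A)) := Finset.disjoint_sdiff
  rw [← union3_eq S A, Finset.sum_union hB, Finset.sum_union hSA]
  rw [union3_eq]

lemma card_split_univ (S A : Finset V) (hSA : Disjoint S A) :
    Fintype.card V = S.card + A.card + (univ \ (S ∪ A)).card := by
  have := card_split S A hSA univ
  simpa [Finset.univ_inter, Finset.inter_univ] using this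

variable (G : SimpleGraph V) [DecidableRel G.Adj]

lemma nbr_inter_comm (A B : Finset V) :
    ∑ x ∈ A, (G.neighborFinset x ∩ B).card = ∑ u ∈ B, (G.neighborFinset u ∩ A).card := by
  have h : ∀ (C D : Finset V) (x : V), (G.neighborFinset x ∩ C).card
      = ∑ y ∈ C, if G.Adj x y then 1 else 0 := by
    intro C D x
    rw [← Finset.card_filter]
    congr 1
    ext y
    simp [Finset.mem_filter, Finset.mem_inter, SimpleGraph.mem_neighborFinset, and_comm]
  simp only [h _ A, h _ B]
  rw [Finset.sum_comm]
  apply Finset.sum_congr rfl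
  intro u _
  apply Finset.sum_congr rfl
  intro x _
  simp [G.adj_comm]

lemma one_le_nbr_inter {A : Finset V} {x y : V} (hy : y ∈ A) (h : G.Adj x y) :
    1 ≤ (G.neighborFinset x ∩ A).card := by
  apply Finset.card_pos.mpr
  exact ⟨y, Finset.mem_inter.mpr ⟨(SimpleGraph.mem_neighborFinset _ _ _).mpr h, hy⟩⟩

end Count

section Case1
variable {V : Type*} [Fintype V] [DecidableEq V] {G : SimpleGraph V} [DecidableRel G.Adj]
variable (hfree : ¬ HasC4 G)
    (hsat : ∀ u v : V, u ≠ v → ¬ G.Adj u v → HasC4 (G ⊔ SimpleGraph.fromEdgeSet {s(u, v)}))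

include hfree hsat

/-- two adjacent degree-one vertices are impossible (n ≥ 3) -/
lemma no_adj_leaves (hn : 3 ≤ Fintype.card V) {p q : V}
    (hp : G.neighborFinset p = {q}) (hq : G.neighborFinset q = {p}) : False := by
  have hpq : p ≠ q := by
    have : G.Adj p q := (mem_neighborFinset G p q).mp (by rw [hp]; exact mem_singleton_self q)
    exact this.ne
  have hex : ∃ r, r ∉ ({p, q} : Finset V) := by
    by_contra hc
    push_neg at hc
    have : (univ : Finset V).card ≤ ({p, q} : Finset V).card :=
      Finset.card_le_card (fun r _ => hc r)
    have h2 : ({p, q} : Finset V).card ≤ 2 := by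
      have := Finset.card_insert_le p ({q} : Finset V)
      simpa using this
    rw [Finset.card_univ] at this
    omega
  obtain ⟨r, hr⟩ := hex
  simp only [Finset.mem_insert, Finset.mem_singleton, not_or] at hr
  have hnadj : ¬ G.Adj p r := by
    intro h
    have : r ∈ G.neighborFinset p := (mem_neighborFinset G p r).mpr h
    rw [hp] at this
    exact hr.2 (by simpa using this)
  obtain ⟨x, y, h1, h2, h3, hxy, hux, huy, hvx, hvy⟩ :=
    sat_P3 hfree hsat (fun h => hr.1 h.symm) hnadj
  have hx : x = q := by
    have : x ∈ G.neighborFinset p := (mem_neighborFinset G p x).mpr h1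
    rwa [hp, mem_singleton] at this
  have hyq : y ∈ G.neighborFinset q := (mem_neighborFinset G q y).mpr (hx ▸ h2)
  rw [hq, mem_singleton] at hyq
  exact huy hyq.symm

/-- distinct nonadjacent degree-one vertices have distinct adjacent hubs -/
lemma leaf_hubs (hn : 3 ≤ Fintype.card V) {p q hp hq : V}
    (hP : G.neighborFinset p = {hp}) (hQ : G.neighborFinset q = {hq}) (hpq : p ≠ q) :
    hp ≠ hq ∧ G.Adj hp hq := by
  have hnadj : ¬ G.Adj p q := by
    intro h
    have h1 : q ∈ G.neighborFinset p := (mem_neighborFinset G p q).mpr h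
    have h2 : p ∈ G.neighborFinset q := (mem_neighborFinset G q p).mpr h.symm
    rw [hP, mem_singleton] at h1
    rw [hQ, mem_singleton] at h2
    subst h1; subst h2
    exact no_adj_leaves hfree hsat hn hP hQ
  obtain ⟨x, y, h1, h2, h3, hxy, hux, huy, hvx, hvy⟩ := sat_P3 hfree hsat hpq hnadj
  have hx : x = hp := by
    have : x ∈ G.neighborFinset p := (mem_neighborFinset G p x).mpr h1
    rwa [hP, mem_singleton] at this
  have hy : y = hq := by
    have : y ∈ G.neighborFinset q := (mem_neighborFinset G q y).mpr h3.symm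
    rwa [hQ, mem_singleton] at this
  subst hx; subst hy
  exact ⟨hxy, h2⟩

lemma caseDeg1 (hn : 5 ≤ Fintype.card V) {ℓ w : V}
    (hℓ : G.neighborFinset ℓ = {w}) :
    3 * Fintype.card V ≤ (∑ v, G.degree v) + 6 := by
  classical
  set A := G.neighborFinset w with hA
  set B := univ \ ({w} ∪ A) with hB
  have hwA : w ∉ A := by simp [hA]
  have hSA : Disjoint ({w} : Finset V) A := by
    simp [Finset.disjoint_singleton_left, hwA]
  have hadjℓ : ∀ x, G.Adj ℓ x ↔ x = w := by
    intro x
    constructor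
    · intro h
      have : x ∈ G.neighborFinset ℓ := (mem_neighborFinset G ℓ x).mpr h
      rwa [hℓ, mem_singleton] at this
    · rintro rfl
      exact (mem_neighborFinset G ℓ _).mp (by rw [hℓ]; exact mem_singleton_self _)
  have hℓw : G.Adj ℓ w := (hadjℓ w).mpr rfl
  have hℓA : ℓ ∈ A := (mem_neighborFinset G w ℓ).mpr hℓw.symm
  have hmemA : ∀ x, x ∈ A ↔ G.Adj w x := fun x => mem_neighborFinset G w x
  have hmemB : ∀ u, u ∈ B ↔ (u ≠ w ∧ u ∉ A) := by
    intro u; simp [hB, not_or]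
  -- (b) every x ∈ A, x ≠ ℓ, has a neighbor in A
  have claimb : ∀ x ∈ A, x ≠ ℓ → 1 ≤ (G.neighborFinset x ∩ A).card := by
    intro x hx hxℓ
    have hxw : x ≠ w := fun h => hwA (h ▸ hx)
    have hnadj : ¬ G.Adj ℓ x := fun h => hxw ((hadjℓ x).mp h)
    obtain ⟨p, q, h1, h2, h3, hpq, hup, huq, hvp, hvq⟩ :=
      sat_P3 hfree hsat (Ne.symm hxℓ) hnadj
    have hp : p = w := (hadjℓ p).mp h1
    subst hp
    have hqA : q ∈ A := (hmemA q).mpr h2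
    exact one_le_nbr_inter G hqA h3.symm
  -- (c) every u ∈ B has a neighbor in A
  have claimc : ∀ u ∈ B, 1 ≤ (G.neighborFinset u ∩ A).card := by
    intro u hu
    rw [hmemB] at hu
    have hℓu : ℓ ≠ u := fun h => hu.2 (h ▸ hℓA)
    have hnadj : ¬ G.Adj ℓ u := fun h => hu.1 ((hadjℓ u).mp h)
    obtain ⟨p, q, h1, h2, h3, hpq, hup, huq, hvp, hvq⟩ := sat_P3 hfree hsat hℓu hnadj
    have hp : p = w := (hadjℓ p).mp h1
    subst hp
    have hqA : q ∈ A := (hmemA q).mpr h2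
    exact one_le_nbr_inter G hqA h3.symm
  -- the hub of a leaf in B is its A-neighbor
  have hubA : ∀ u ∈ B, ∀ h : V, G.neighborFinset u = {h} → h ∈ A := by
    intro u hu h hh
    have := claimc u hu
    rw [hh] at this
    have hne : ({h} ∩ A).Nonempty := Finset.card_pos.mp (by omega)
    obtain ⟨z, hz⟩ := hne
    rw [Finset.mem_inter, mem_singleton] at hz
    exact hz.1 ▸ hz.2
  -- (d) at most two leaves in B
  set Bleaf := B.filter (fun u => G.degree u = 1) with hBleaf
  have hL2 : Bleaf.card ≤ 2 := by
    by_contra hc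
    push_neg at hc
    obtain ⟨u₁, hu₁, u₂, hu₂, u₃, hu₃, h12, h13, h23⟩ :=
      Finset.two_lt_card.mp (show 2 < Bleaf.card by omega)
    simp only [hBleaf, Finset.mem_filter] at hu₁ hu₂ hu₃
    obtain ⟨h₁, hh₁⟩ := Finset.card_eq_one.mp (hu₁.2)
    obtain ⟨h₂, hh₂⟩ := Finset.card_eq_one.mp (hu₂.2)
    obtain ⟨h₃, hh₃⟩ := Finset.card_eq_one.mp (hu₃.2)
    have h3' : 3 ≤ Fintype.card V := by omega
    obtain ⟨hne12, hadj12⟩ := leaf_hubs hfree hsat h3' hh₁ hh₂ h12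
    obtain ⟨hne13, hadj13⟩ := leaf_hubs hfree hsat h3' hh₁ hh₃ h13
    obtain ⟨hne23, hadj23⟩ := leaf_hubs hfree hsat h3' hh₂ hh₃ h23
    -- hubs with w
    have hbw : ∀ (u : V), u ∈ B → ∀ hv : V, G.neighborFinset u = {hv} →
        w ≠ hv ∧ G.Adj w hv := by
      intro u hu hv hhv
      have hℓu : ℓ ≠ u := fun h => ((hmemB u).mp hu).2 (h ▸ hℓA)
      exact leaf_hubs hfree hsat h3' hℓ hhv hℓu
    obtain ⟨hw1, haw1⟩ := hbw u₁ hu₁.1 h₁ hh₁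
    obtain ⟨hw2, haw2⟩ := hbw u₂ hu₂.1 h₂ hh₂
    obtain ⟨hw3, haw3⟩ := hbw u₃ hu₃.1 h₃ hh₃
    exact no_two_common hfree hw2 hne13 haw1 hadj12 hadj23 haw3.symm
  -- degree split
  have hdeg : ∀ x : V, G.degree x =
      (G.neighborFinset x ∩ {w}).card + (G.neighborFinset x ∩ A).card +
      (G.neighborFinset x ∩ B).card := by
    intro x
    exact card_split {w} A hSA (G.neighborFinset x)
  -- pieces
  have hAw : ∀ x ∈ A, (G.neighborFinset x ∩ {w}).card = 1 := by
    intro x hx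
    have : w ∈ G.neighborFinset x := (mem_neighborFinset G x w).mpr ((hmemA x).mp hx).symm
    rw [Finset.inter_singleton_of_mem this]
    simp
  have hBw : ∀ u ∈ B, (G.neighborFinset u ∩ {w}).card = 0 := by
    intro u hu
    rw [Finset.card_eq_zero, Finset.eq_empty_iff_forall_notMem]
    intro z hz
    rw [Finset.mem_inter, mem_singleton] at hz
    obtain ⟨hz1, hzw⟩ := hz
    rw [hzw] at hz1
    have : G.Adj w u := ((mem_neighborFinset G u w).mp hz1).symm
    exact ((hmemB u).mp hu).2 ((hmemA u).mpr this)
  -- sums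
  have hsum := sum_split {w} A hSA (fun x => G.degree x)
  rw [Finset.sum_singleton, ← hB] at hsum
  have hdw : G.degree w = A.card := rfl
  have hsumA : ∑ x ∈ A, G.degree x = A.card +
      ((∑ x ∈ A, (G.neighborFinset x ∩ A).card) + ∑ x ∈ A, (G.neighborFinset x ∩ B).card) := by
    calc ∑ x ∈ A, G.degree x
        = ∑ x ∈ A, ((G.neighborFinset x ∩ {w}).card + ((G.neighborFinset x ∩ A).card +
            (G.neighborFinset x ∩ B).card)) := by
          apply Finset.sum_congr rfl; intro x hx; rw [hdeg x]; ring
      _ = ∑ x ∈ A, (G.neighborFinset x ∩ {w}).card + ((∑ x ∈ A, (G.neighborFinset x ∩ A).card) +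
            ∑ x ∈ A, (G.neighborFinset x ∩ B).card) := by
          rw [Finset.sum_add_distrib, Finset.sum_add_distrib]
      _ = _ := by
          congr 1
          rw [Finset.sum_congr rfl hAw, Finset.sum_const, smul_eq_mul, mul_one]
  have hXAA : A.card ≤ (∑ x ∈ A, (G.neighborFinset x ∩ A).card) + 1 := by
    have h1 : ∑ x ∈ A.erase ℓ, (G.neighborFinset x ∩ A).card ≤
        ∑ x ∈ A, (G.neighborFinset x ∩ A).card :=
      Finset.sum_le_sum_of_subset (Finset.erase_subset ℓ A)
    have h2 : (A.erase ℓ).card ≤ ∑ x ∈ A.erase ℓ, (G.neighborFinset x ∩ A).card := by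
      have := Finset.card_nsmul_le_sum (A.erase ℓ)
        (fun x => (G.neighborFinset x ∩ A).card) 1
        (fun x hx => claimb x (Finset.mem_of_mem_erase hx) (Finset.ne_of_mem_erase hx))
      simpa using this
    have h3 : (A.erase ℓ).card = A.card - 1 := Finset.card_erase_of_mem hℓA
    have h4 : 1 ≤ A.card := Finset.card_pos.mpr ⟨ℓ, hℓA⟩
    omega
  have hcomm : ∑ x ∈ A, (G.neighborFinset x ∩ B).card
      = ∑ u ∈ B, (G.neighborFinset u ∩ A).card := nbr_inter_comm G A B
  -- B side
  have hBside : 3 * B.card ≤ (∑ u ∈ B, (G.neighborFinset u ∩ A).card) +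
      (∑ u ∈ B, G.degree u) + Bleaf.card := by
    have hpt : ∀ u ∈ B, 3 ≤ (G.neighborFinset u ∩ A).card + G.degree u +
        (if G.degree u = 1 then 1 else 0) := by
      intro u hu
      have hc := claimc u hu
      have hd1 : 1 ≤ G.degree u := by
        have : (G.neighborFinset u ∩ A).card ≤ (G.neighborFinset u).card :=
          Finset.card_le_card Finset.inter_subset_left
        have hdd : G.degree u = (G.neighborFinset u).card := rfl
        omega
      by_cases h : G.degree u = 1
      · rw [if_pos h]; omega
      · rw [if_neg h]; omega
    have := Finset.card_nsmul_le_sum B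
      (fun u => (G.neighborFinset u ∩ A).card + G.degree u +
        (if G.degree u = 1 then 1 else 0)) 3 hpt
    rw [smul_eq_mul, mul_comm] at this
    have hsplit : ∑ u ∈ B, ((G.neighborFinset u ∩ A).card + G.degree u +
        (if G.degree u = 1 then 1 else 0)) = (∑ u ∈ B, (G.neighborFinset u ∩ A).card) +
        (∑ u ∈ B, G.degree u) + Bleaf.card := by
      rw [Finset.sum_add_distrib, Finset.sum_add_distrib]
      congr 1
      exact (Finset.card_filter _ _).symm
    omega
  have hcard := card_split_univ ({w} : Finset V) A hSA
  rw [Finset.card_singleton, ← hB] at hcard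
  omega

end Case1

section CaseP
variable {V : Type*} [Fintype V] [DecidableEq V] {G : SimpleGraph V} [DecidableRel G.Adj]
variable (hfree : ¬ HasC4 G)
    (hsat : ∀ u v : V, u ≠ v → ¬ G.Adj u v → HasC4 (G ⊔ SimpleGraph.fromEdgeSet {s(u, v)}))

include hfree hsat

lemma caseP (hn : 5 ≤ Fintype.card V) (hdeg2 : ∀ u : V, 2 ≤ G.degree u) {v a b : V}
    (hNv : G.neighborFinset v = {a, b}) (hab : a ≠ b) (hnab : ¬ G.Adj a b) :
    3 * Fintype.card V ≤ (∑ x, G.degree x) + 6 := by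
  classical
  have hadjv : ∀ x, G.Adj v x ↔ (x = a ∨ x = b) := by
    intro x
    rw [← mem_neighborFinset G v x, hNv]
    simp
  have hva : G.Adj v a := (hadjv a).mpr (Or.inl rfl)
  have hvb : G.Adj v b := (hadjv b).mpr (Or.inr rfl)
  set S : Finset V := {a, b} with hS
  set A := (G.neighborFinset a ∪ G.neighborFinset b) \ S with hA
  set B := univ \ (S ∪ A) with hB
  have hSA : Disjoint S A := Finset.disjoint_sdiff
  have hmemA : ∀ x, x ∈ A ↔ ((G.Adj a x ∨ G.Adj b x) ∧ x ≠ a ∧ x ≠ b) := by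
    intro x
    simp [hA, hS, Finset.mem_sdiff, Finset.mem_union, mem_neighborFinset, not_or]
  have hvA : v ∈ A := (hmemA v).mpr ⟨Or.inl hva.symm, hva.ne, hvb.ne⟩
  have hmemB : ∀ u, u ∈ B ↔ (u ≠ a ∧ u ≠ b ∧ u ∉ A) := by
    intro u; simp [hB, hS, not_or]
  have hBnadj : ∀ u ∈ B, ¬ G.Adj a u ∧ ¬ G.Adj b u := by
    intro u hu
    rw [hmemB] at hu
    constructor
    · intro h; exact hu.2.2 ((hmemA u).mpr ⟨Or.inl h, hu.1, hu.2.1⟩)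
    · intro h; exact hu.2.2 ((hmemA u).mpr ⟨Or.inr h, hu.1, hu.2.1⟩)
  have hcommon : ∀ x, G.Adj a x → G.Adj b x → x = v := by
    intro x hax hbx
    by_contra hxv
    exact no_two_common hfree hab (fun h => hxv h.symm) hva.symm hvb hbx hax.symm
  have hNaNb : G.neighborFinset a ∩ G.neighborFinset b = {v} := by
    ext z
    simp only [Finset.mem_inter, mem_neighborFinset, mem_singleton]
    constructor
    · rintro ⟨h1, h2⟩; exact hcommon z h1 h2
    · rintro rfl; exact ⟨hva.symm, hvb.symm⟩
  have hAeq : A = G.neighborFinset a ∪ G.neighborFinset b := by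
    rw [hA, Finset.sdiff_eq_self_iff_disjoint]
    rw [Finset.disjoint_left]
    intro z hz
    simp only [hS, Finset.mem_insert, mem_singleton]
    push_neg
    rw [Finset.mem_union, mem_neighborFinset, mem_neighborFinset] at hz
    rcases hz with h | h
    · exact ⟨fun he => G.irrefl (he ▸ h), fun he => hnab (he ▸ h)⟩
    · exact ⟨fun he => hnab (he ▸ h).symm, fun he => G.irrefl (he ▸ h)⟩
  have hcardA : A.card + 1 = G.degree a + G.degree b := by
    have h1 := Finset.card_union_add_card_inter (G.neighborFinset a) (G.neighborFinset b)
    rw [hNaNb, Finset.card_singleton] at h1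
    rw [hAeq]
    exact h1
  -- membership of q in A from a path starting at v
  have hqA : ∀ p q : V, G.Adj v p → G.Adj p q → q ∈ A := by
    intro p q h1 h2
    have hp : p = a ∨ p = b := (hadjv p).mp h1
    have hq : q ∈ G.neighborFinset a ∪ G.neighborFinset b := by
      rw [Finset.mem_union, mem_neighborFinset, mem_neighborFinset]
      rcases hp with rfl | rfl
      · exact Or.inl h2
      · exact Or.inr h2
    have hqa : q ≠ a := by
      rintro rfl
      rcases hp with rfl | rfl
      · exact G.irrefl h2
      · exact hnab h2.symm
    have hqb : q ≠ b := by
      rintro rfl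
      rcases hp with rfl | rfl
      · exact hnab h2
      · exact G.irrefl h2
    rw [hmemA]
    rw [Finset.mem_union, mem_neighborFinset, mem_neighborFinset] at hq
    exact ⟨hq, hqa, hqb⟩
  -- claim A : every x ∈ A, x ≠ v has a neighbor in A
  have claimA : ∀ x ∈ A, x ≠ v → 1 ≤ (G.neighborFinset x ∩ A).card := by
    intro x hx hxv
    have hxS := (hmemA x).mp hx
    have hnadj : ¬ G.Adj v x := by
      rw [hadjv]
      push_neg
      exact ⟨hxS.2.1, hxS.2.2⟩
    obtain ⟨p, q, h1, h2, h3, hpq, hup, huq, hvp, hvq⟩ :=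
      sat_P3 hfree hsat (Ne.symm hxv) hnadj
    exact one_le_nbr_inter G (hqA p q h1 h2) h3.symm
  -- claim B : every u ∈ B has a neighbor in A
  have claimB : ∀ u ∈ B, 1 ≤ (G.neighborFinset u ∩ A).card := by
    intro u hu
    have hu' := (hmemB u).mp hu
    have hvu : v ≠ u := by rintro rfl; exact hu'.2.2 hvA
    have hnadj : ¬ G.Adj v u := by
      rw [hadjv]; push_neg; exact ⟨hu'.1, hu'.2.1⟩
    obtain ⟨p, q, h1, h2, h3, hpq, hup, huq, hvp, hvq⟩ := sat_P3 hfree hsat hvu hnadj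
    exact one_le_nbr_inter G (hqA p q h1 h2) h3.symm
  -- degree split
  have hdeg : ∀ x : V, G.degree x =
      (G.neighborFinset x ∩ S).card + (G.neighborFinset x ∩ A).card +
      (G.neighborFinset x ∩ B).card := by
    intro x
    exact card_split S A hSA (G.neighborFinset x)
  have hS1A : ∀ x ∈ A, 1 ≤ (G.neighborFinset x ∩ S).card := by
    intro x hx
    rcases ((hmemA x).mp hx).1 with h | h
    · apply Finset.card_pos.mpr
      exact ⟨a, Finset.mem_inter.mpr ⟨(mem_neighborFinset G x a).mpr h.symm, by simp [hS]⟩⟩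
    · apply Finset.card_pos.mpr
      exact ⟨b, Finset.mem_inter.mpr ⟨(mem_neighborFinset G x b).mpr h.symm, by simp [hS]⟩⟩
  have hS1v : 2 ≤ (G.neighborFinset v ∩ S).card := by
    have hsub : S ⊆ G.neighborFinset v ∩ S := by
      intro z hz
      rw [Finset.mem_inter]
      refine ⟨?_, hz⟩
      rw [hS] at hz
      simp only [Finset.mem_insert, mem_singleton] at hz
      rcases hz with rfl | rfl
      · exact (mem_neighborFinset G v z).mpr hva
      · exact (mem_neighborFinset G v z).mpr hvb
    calc 2 = S.card := (Finset.card_pair hab).symm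
      _ ≤ _ := Finset.card_le_card hsub
  have hsumAS : A.card + 1 ≤ ∑ x ∈ A, (G.neighborFinset x ∩ S).card := by
    have h1 : ∑ x ∈ A.erase v, (G.neighborFinset x ∩ S).card + (G.neighborFinset v ∩ S).card
        = ∑ x ∈ A, (G.neighborFinset x ∩ S).card := Finset.sum_erase_add A _ hvA
    have h2 : (A.erase v).card ≤ ∑ x ∈ A.erase v, (G.neighborFinset x ∩ S).card := by
      have := Finset.card_nsmul_le_sum (A.erase v)
        (fun x => (G.neighborFinset x ∩ S).card) 1
        (fun x hx => hS1A x (Finset.mem_of_mem_erase hx))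
      simpa using this
    have h3 : (A.erase v).card = A.card - 1 := Finset.card_erase_of_mem hvA
    have h4 : 1 ≤ A.card := Finset.card_pos.mpr ⟨v, hvA⟩
    omega
  have hsumAA : A.card ≤ (∑ x ∈ A, (G.neighborFinset x ∩ A).card) + 1 := by
    have h1 : ∑ x ∈ A.erase v, (G.neighborFinset x ∩ A).card ≤
        ∑ x ∈ A, (G.neighborFinset x ∩ A).card :=
      Finset.sum_le_sum_of_subset (Finset.erase_subset v A)
    have h2 : (A.erase v).card ≤ ∑ x ∈ A.erase v, (G.neighborFinset x ∩ A).card := by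
      have := Finset.card_nsmul_le_sum (A.erase v)
        (fun x => (G.neighborFinset x ∩ A).card) 1
        (fun x hx => claimA x (Finset.mem_of_mem_erase hx) (Finset.ne_of_mem_erase hx))
      simpa using this
    have h3 : (A.erase v).card = A.card - 1 := Finset.card_erase_of_mem hvA
    have h4 : 1 ≤ A.card := Finset.card_pos.mpr ⟨v, hvA⟩
    omega
  have hcomm : ∑ x ∈ A, (G.neighborFinset x ∩ B).card
      = ∑ u ∈ B, (G.neighborFinset u ∩ A).card := nbr_inter_comm G A B
  -- B side
  have hBside : 3 * B.card ≤ (∑ u ∈ B, (G.neighborFinset u ∩ A).card) +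
      (∑ u ∈ B, G.degree u) := by
    have hpt : ∀ u ∈ B, 3 ≤ (G.neighborFinset u ∩ A).card + G.degree u := by
      intro u hu
      have hBn := hBnadj u hu
      have hS0 : (G.neighborFinset u ∩ S).card = 0 := by
        rw [Finset.card_eq_zero, Finset.eq_empty_iff_forall_notMem]
        intro z hz
        rw [Finset.mem_inter] at hz
        have hz2 := hz.2
        rw [hS] at hz2
        simp only [Finset.mem_insert, mem_singleton] at hz2
        have hz1 := (mem_neighborFinset G u z).mp hz.1
        rcases hz2 with rfl | rfl
        · exact hBn.1 hz1.symm
        · exact hBn.2 hz1.symm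
      have hdu := hdeg u
      rw [hS0] at hdu
      have hd2 := hdeg2 u
      by_cases hnB : (G.neighborFinset u ∩ B).card = 0
      · omega
      · have := claimB u hu
        omega
    have := Finset.card_nsmul_le_sum B
      (fun u => (G.neighborFinset u ∩ A).card + G.degree u) 3 hpt
    rw [smul_eq_mul, mul_comm] at this
    rw [Finset.sum_add_distrib] at this
    omega
  -- assembly
  have hsum := sum_split S A hSA (fun x => G.degree x)
  rw [← hB] at hsum
  have hsumS : ∑ x ∈ S, G.degree x = G.degree a + G.degree b := by
    rw [hS, Finset.sum_pair hab]
  have hsumA : ∑ x ∈ A, G.degree x =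
      (∑ x ∈ A, (G.neighborFinset x ∩ S).card) + ((∑ x ∈ A, (G.neighborFinset x ∩ A).card) +
        ∑ x ∈ A, (G.neighborFinset x ∩ B).card) := by
    calc ∑ x ∈ A, G.degree x
        = ∑ x ∈ A, ((G.neighborFinset x ∩ S).card + ((G.neighborFinset x ∩ A).card +
            (G.neighborFinset x ∩ B).card)) := by
          apply Finset.sum_congr rfl; intro x hx; rw [hdeg x]; ring
      _ = _ := by rw [Finset.sum_add_distrib, Finset.sum_add_distrib]
  have hcard := card_split_univ S A hSA
  rw [← hB] at hcard
  have hScard : S.card = 2 := Finset.card_pair hab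
  omega

end CaseP

section CaseT
variable {V : Type*} [Fintype V] [DecidableEq V] {G : SimpleGraph V} [DecidableRel G.Adj]

lemma nbr_pair {z x y : V} (hz : G.degree z = 2) (hx : G.Adj z x) (hy : G.Adj z y)
    (hxy : x ≠ y) : G.neighborFinset z = {x, y} := by
  have hsub : ({x, y} : Finset V) ⊆ G.neighborFinset z := by
    intro t ht
    simp only [Finset.mem_insert, Finset.mem_singleton] at ht
    rcases ht with rfl | rfl
    · exact (mem_neighborFinset G z t).mpr hx
    · exact (mem_neighborFinset G z t).mpr hy
  have hcard : (G.neighborFinset z).card ≤ ({x, y} : Finset V).card := by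
    have h1 : (G.neighborFinset z).card = 2 := hz
    rw [h1, Finset.card_pair hxy]
  exact (Finset.eq_of_subset_of_card_le hsub hcard).symm

variable (hfree : ¬ HasC4 G)
    (hsat : ∀ u v : V, u ≠ v → ¬ G.Adj u v → HasC4 (G ⊔ SimpleGraph.fromEdgeSet {s(u, v)}))

include hfree hsat

lemma caseT (hn : 5 ≤ Fintype.card V) (hdeg2 : ∀ u : V, 2 ≤ G.degree u)
    (htri : ∀ z x y : V, G.degree z = 2 → G.Adj z x → G.Adj z y → x ≠ y → G.Adj x y)
    {v a b : V} (hNv : G.neighborFinset v = {a, b}) (hab : a ≠ b) (hadjab : G.Adj a b) :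
    3 * Fintype.card V ≤ (∑ x, G.degree x) + 6 := by
  classical
  have hadjv : ∀ x, G.Adj v x ↔ (x = a ∨ x = b) := by
    intro x
    rw [← mem_neighborFinset G v x, hNv]
    simp
  have hva : G.Adj v a := (hadjv a).mpr (Or.inl rfl)
  have hvb : G.Adj v b := (hadjv b).mpr (Or.inr rfl)
  set S : Finset V := {a, b} with hS
  set A := (G.neighborFinset a ∪ G.neighborFinset b) \ S with hA
  set B := univ \ (S ∪ A) with hB
  have hSA : Disjoint S A := Finset.disjoint_sdiff
  have hmemA : ∀ x, x ∈ A ↔ ((G.Adj a x ∨ G.Adj b x) ∧ x ≠ a ∧ x ≠ b) := by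
    intro x
    simp [hA, hS, Finset.mem_sdiff, Finset.mem_union, mem_neighborFinset, not_or]
  have hvA : v ∈ A := (hmemA v).mpr ⟨Or.inl hva.symm, hva.ne, hvb.ne⟩
  have hmemB : ∀ u, u ∈ B ↔ (u ≠ a ∧ u ≠ b ∧ u ∉ A) := by
    intro u; simp [hB, hS, not_or]
  have hBnadj : ∀ u ∈ B, ¬ G.Adj a u ∧ ¬ G.Adj b u := by
    intro u hu
    rw [hmemB] at hu
    constructor
    · intro h; exact hu.2.2 ((hmemA u).mpr ⟨Or.inl h, hu.1, hu.2.1⟩)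
    · intro h; exact hu.2.2 ((hmemA u).mpr ⟨Or.inr h, hu.1, hu.2.1⟩)
  have hABdisj : ∀ z : V, z ∈ A → z ∈ B → False := by
    intro z hzA hzB
    exact ((hmemB z).mp hzB).2.2 hzA
  have hcommon : ∀ x, G.Adj a x → G.Adj b x → x = v := by
    intro x hax hbx
    by_contra hxv
    exact no_two_common hfree hab (fun h => hxv h.symm) hva.symm hvb hbx hax.symm
  have hNaNb : G.neighborFinset a ∩ G.neighborFinset b = {v} := by
    ext z
    simp only [Finset.mem_inter, mem_neighborFinset, mem_singleton]
    constructor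
    · rintro ⟨h1, h2⟩; exact hcommon z h1 h2
    · rintro rfl; exact ⟨hva.symm, hvb.symm⟩
  have hcardA : A.card + 3 = G.degree a + G.degree b := by
    have h1 := Finset.card_union_add_card_inter (G.neighborFinset a) (G.neighborFinset b)
    rw [hNaNb, Finset.card_singleton] at h1
    have hda : (G.neighborFinset a).card = G.degree a := rfl
    have hdb : (G.neighborFinset b).card = G.degree b := rfl
    rw [hda, hdb] at h1
    have hsub : S ⊆ G.neighborFinset a ∪ G.neighborFinset b := by
      intro z hz
      rw [hS] at hz
      simp only [Finset.mem_insert, mem_singleton] at hz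
      rw [Finset.mem_union, mem_neighborFinset, mem_neighborFinset]
      rcases hz with rfl | rfl
      · exact Or.inr hadjab.symm
      · exact Or.inl hadjab
    have h2 : A.card + S.card = (G.neighborFinset a ∪ G.neighborFinset b).card := by
      rw [hA]
      exact Finset.card_sdiff_add_card_eq_card hsub
    have h3 : S.card = 2 := Finset.card_pair hab
    omega
  -- no cross edges / same-hub for A-edges
  have hNoCross : ∀ x y, x ∈ A → y ∈ A → G.Adj x y → G.Adj a x → G.Adj b y → False := by
    intro x y hxA hyA hxy hax hby
    have hya : y ≠ a := ((hmemA y).mp hyA).2.1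
    have hxb : x ≠ b := ((hmemA x).mp hxA).2.2
    exact hfree (hasC4_of a x y b hax hxy hby.symm hadjab.symm (Ne.symm hya) hxb)
  have hSameHub : ∀ x y, x ∈ A → y ∈ A → G.Adj x y →
      ((G.Adj a x ∧ G.Adj a y) ∨ (G.Adj b x ∧ G.Adj b y)) := by
    intro x y hxA hyA hxy
    rcases ((hmemA x).mp hxA).1 with hax | hbx
    · rcases ((hmemA y).mp hyA).1 with hay | hby
      · exact Or.inl ⟨hax, hay⟩
      · exact absurd (hNoCross x y hxA hyA hxy hax hby) (fun h => h)
    · rcases ((hmemA y).mp hyA).1 with hay | hby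
      · exact absurd (hNoCross y x hyA hxA hxy.symm hay hbx) (fun h => h)
      · exact Or.inr ⟨hbx, hby⟩
  -- every x in A has at most one neighbor inside A
  have hAdeg1 : ∀ x ∈ A, (G.neighborFinset x ∩ A).card ≤ 1 := by
    intro x hxA
    rw [Finset.card_le_one]
    intro y hy y' hy'
    by_contra hyy'
    rw [Finset.mem_inter, mem_neighborFinset] at hy hy'
    obtain ⟨hxy, hyA⟩ := hy
    obtain ⟨hxy', hy'A⟩ := hy'
    have h1 := hSameHub x y hxA hyA hxy
    have h2 := hSameHub x y' hxA hy'A hxy'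
    rcases h1 with ⟨hax, hay⟩ | ⟨hbx, hby⟩ <;> rcases h2 with ⟨hax', hay'⟩ | ⟨hbx', hby'⟩
    · exact no_two_common hfree (fun h => ((hmemA x).mp hxA).2.1 h) hyy'
        hxy hay.symm hay' hxy'.symm
    · have hxveq := hcommon x hax hbx'
      rw [hxveq] at hxy
      rcases (hadjv y).mp hxy with h | h
      · exact ((hmemA y).mp hyA).2.1 h
      · exact ((hmemA y).mp hyA).2.2 h
    · have hxveq := hcommon x hax' hbx
      rw [hxveq] at hxy
      rcases (hadjv y).mp hxy with h | h
      · exact ((hmemA y).mp hyA).2.1 h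
      · exact ((hmemA y).mp hyA).2.2 h
    · exact no_two_common hfree (fun h => ((hmemA x).mp hxA).2.2 h) hyy'
        hxy hby.symm hby' hxy'.symm
  -- every u in B has a neighbor in A, and if deg u = 2 exactly the structure
  have claimB : ∀ u ∈ B, 1 ≤ (G.neighborFinset u ∩ A).card := by
    intro u hu
    have hu' := (hmemB u).mp hu
    have hvu : v ≠ u := by rintro rfl; exact hu'.2.2 hvA
    have hnadj : ¬ G.Adj v u := by
      rw [hadjv]; push_neg; exact ⟨hu'.1, hu'.2.1⟩
    obtain ⟨p, q, h1, h2, h3, hpq, hup, huq, hvp, hvq⟩ := sat_P3 hfree hsat hvu hnadj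
    have hp : p = a ∨ p = b := (hadjv p).mp h1
    have hBn := hBnadj u hu
    have hq : q ∈ G.neighborFinset a ∪ G.neighborFinset b := by
      rw [Finset.mem_union, mem_neighborFinset, mem_neighborFinset]
      rcases hp with rfl | rfl
      · exact Or.inl h2
      · exact Or.inr h2
    have hqa : q ≠ a := by rintro rfl; exact hBn.1 h3
    have hqb : q ≠ b := by rintro rfl; exact hBn.2 h3
    have hqA : q ∈ A := by
      rw [hmemA]
      rw [Finset.mem_union, mem_neighborFinset, mem_neighborFinset] at hq
      exact ⟨hq, hqa, hqb⟩
    exact one_le_nbr_inter G hqA h3.symm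
  -- degree split
  have hdeg : ∀ x : V, G.degree x =
      (G.neighborFinset x ∩ S).card + (G.neighborFinset x ∩ A).card +
      (G.neighborFinset x ∩ B).card := by
    intro x
    exact card_split S A hSA (G.neighborFinset x)
  have hS0B : ∀ u ∈ B, (G.neighborFinset u ∩ S).card = 0 := by
    intro u hu
    have hBn := hBnadj u hu
    rw [Finset.card_eq_zero, Finset.eq_empty_iff_forall_notMem]
    intro z hz
    rw [Finset.mem_inter] at hz
    have hz2 := hz.2
    rw [hS] at hz2
    simp only [Finset.mem_insert, mem_singleton] at hz2
    have hz1 := (mem_neighborFinset G u z).mp hz.1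
    rcases hz2 with rfl | rfl
    · exact hBn.1 hz1.symm
    · exact hBn.2 hz1.symm
  have hS1A : ∀ x ∈ A, 1 ≤ (G.neighborFinset x ∩ S).card := by
    intro x hx
    rcases ((hmemA x).mp hx).1 with h | h
    · apply Finset.card_pos.mpr
      exact ⟨a, Finset.mem_inter.mpr ⟨(mem_neighborFinset G x a).mpr h.symm, by simp [hS]⟩⟩
    · apply Finset.card_pos.mpr
      exact ⟨b, Finset.mem_inter.mpr ⟨(mem_neighborFinset G x b).mpr h.symm, by simp [hS]⟩⟩
  have hS1le : ∀ x ∈ A, x ≠ v → (G.neighborFinset x ∩ S).card ≤ 1 := by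
    intro x hx hxv
    rw [Finset.card_le_one]
    intro z hz z' hz'
    by_contra hzz'
    rw [Finset.mem_inter] at hz hz'
    have hz2 := hz.2; have hz2' := hz'.2
    rw [hS] at hz2 hz2'
    simp only [Finset.mem_insert, mem_singleton] at hz2 hz2'
    have hza := (mem_neighborFinset G x z).mp hz.1
    have hza' := (mem_neighborFinset G x z').mp hz'.1
    have : G.Adj a x ∧ G.Adj b x := by
      rcases hz2 with rfl | rfl <;> rcases hz2' with rfl | rfl
      · exact absurd rfl hzz'
      · exact ⟨hza.symm, hza'.symm⟩
      · exact ⟨hza'.symm, hza.symm⟩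
      · exact absurd rfl hzz'
    exact hxv (hcommon x this.1 this.2)
  have hS1v : 2 ≤ (G.neighborFinset v ∩ S).card := by
    have hsub : S ⊆ G.neighborFinset v ∩ S := by
      intro z hz
      rw [Finset.mem_inter]
      refine ⟨?_, hz⟩
      rw [hS] at hz
      simp only [Finset.mem_insert, mem_singleton] at hz
      rcases hz with rfl | rfl
      · exact (mem_neighborFinset G v z).mpr hva
      · exact (mem_neighborFinset G v z).mpr hvb
    calc 2 = S.card := (Finset.card_pair hab).symm
      _ ≤ _ := Finset.card_le_card hsub
  have hsumAS : A.card + 1 ≤ ∑ x ∈ A, (G.neighborFinset x ∩ S).card := by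
    have h1 : ∑ x ∈ A.erase v, (G.neighborFinset x ∩ S).card + (G.neighborFinset v ∩ S).card
        = ∑ x ∈ A, (G.neighborFinset x ∩ S).card := Finset.sum_erase_add A _ hvA
    have h2 : (A.erase v).card ≤ ∑ x ∈ A.erase v, (G.neighborFinset x ∩ S).card := by
      have := Finset.card_nsmul_le_sum (A.erase v)
        (fun x => (G.neighborFinset x ∩ S).card) 1
        (fun x hx => hS1A x (Finset.mem_of_mem_erase hx))
      simpa using this
    have h3 : (A.erase v).card = A.card - 1 := Finset.card_erase_of_mem hvA
    have h4 : 1 ≤ A.card := Finset.card_pos.mpr ⟨v, hvA⟩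
    omega
  -- the deficient set U
  set U := A.filter (fun x => x ≠ v ∧ (G.neighborFinset x ∩ A).card = 0) with hU
  have hsumAA : A.card ≤ (∑ x ∈ A, (G.neighborFinset x ∩ A).card) + 1 + U.card := by
    have hsub : (A.erase v) \ U ⊆ A := fun x hx =>
      Finset.mem_of_mem_erase (Finset.mem_sdiff.mp hx).1
    have h2 : ((A.erase v) \ U).card ≤ ∑ x ∈ (A.erase v) \ U,
        (G.neighborFinset x ∩ A).card := by
      have := Finset.card_nsmul_le_sum ((A.erase v) \ U)
        (fun x => (G.neighborFinset x ∩ A).card) 1 ?_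
      · simpa using this
      · intro x hx
        rw [Finset.mem_sdiff] at hx
        have hxv := Finset.ne_of_mem_erase hx.1
        have hxA := Finset.mem_of_mem_erase hx.1
        have hne0 : (G.neighborFinset x ∩ A).card ≠ 0 := by
          intro h0
          exact hx.2 (Finset.mem_filter.mpr ⟨hxA, hxv, h0⟩)
        exact Nat.one_le_iff_ne_zero.mpr hne0
    have h1 : ∑ x ∈ (A.erase v) \ U, (G.neighborFinset x ∩ A).card ≤
        ∑ x ∈ A, (G.neighborFinset x ∩ A).card :=
      Finset.sum_le_sum_of_subset hsub
    have h3 : (A.erase v).card ≤ ((A.erase v) \ U).card + U.card := by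
      have := Finset.le_card_sdiff U (A.erase v)
      omega
    have h4 : (A.erase v).card = A.card - 1 := Finset.card_erase_of_mem hvA
    have h5 : 1 ≤ A.card := Finset.card_pos.mpr ⟨v, hvA⟩
    omega
  -- BW : degree-2 vertices of B
  set BW := B.filter (fun u => G.degree u = 2) with hBW
  have hBWB : BW ⊆ B := Finset.filter_subset _ _
  -- structure of BW vertices
  have hBWstruct : ∀ u ∈ BW, ∃ p q : V, p ∈ A ∧ q ∈ B ∧ G.Adj p q ∧
      G.neighborFinset u = {p, q} := by
    intro u hu
    obtain ⟨huB, hu2⟩ := Finset.mem_filter.mp hu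
    obtain ⟨s, t, hst, hNu⟩ := Finset.card_eq_two.mp (show (G.neighborFinset u).card = 2 from hu2)
    have hus : G.Adj u s := (mem_neighborFinset G u s).mp (by rw [hNu]; simp)
    have hut : G.Adj u t := (mem_neighborFinset G u t).mp (by rw [hNu]; simp)
    have hadjst : G.Adj s t := htri u s t hu2 hus hut hst
    have hBn := hBnadj u huB
    have hsS : s ≠ a ∧ s ≠ b := ⟨fun h => hBn.1 (h ▸ hus).symm, fun h => hBn.2 (h ▸ hus).symm⟩
    have htS : t ≠ a ∧ t ≠ b := ⟨fun h => hBn.1 (h ▸ hut).symm, fun h => hBn.2 (h ▸ hut).symm⟩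
    have hsAB : s ∈ A ∨ s ∈ B := by
      by_cases h : s ∈ A
      · exact Or.inl h
      · exact Or.inr ((hmemB s).mpr ⟨hsS.1, hsS.2, h⟩)
    have htAB : t ∈ A ∨ t ∈ B := by
      by_cases h : t ∈ A
      · exact Or.inl h
      · exact Or.inr ((hmemB t).mpr ⟨htS.1, htS.2, h⟩)
    have hnotbothA : ¬ (s ∈ A ∧ t ∈ A) := by
      rintro ⟨hsA, htA⟩
      rcases hSameHub s t hsA htA hadjst with ⟨has, hat⟩ | ⟨hbs, hbt⟩
      · refine no_two_common hfree (show u ≠ a from ((hmemB u).mp huB).1) hst hus has.symm hat hut.symm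
      · refine no_two_common hfree (show u ≠ b from ((hmemB u).mp huB).2.1) hst hus hbs.symm hbt hut.symm
    have hnotbothB : ¬ (s ∈ B ∧ t ∈ B) := by
      rintro ⟨hsB, htB⟩
      have h1 := claimB u huB
      have : (G.neighborFinset u ∩ A).card = 0 := by
        rw [Finset.card_eq_zero, Finset.eq_empty_iff_forall_notMem]
        intro z hz
        rw [Finset.mem_inter, hNu] at hz
        have hz1 := hz.1
        simp only [Finset.mem_insert, mem_singleton] at hz1
        rcases hz1 with rfl | rfl
        · exact hABdisj z hz.2 hsB
        · exact hABdisj z hz.2 htB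
      omega
    rcases hsAB with hsA | hsB
    · rcases htAB with htA | htB
      · exact absurd ⟨hsA, htA⟩ hnotbothA
      · exact ⟨s, t, hsA, htB, hadjst, hNu⟩
    · rcases htAB with htA | htB
      · exact ⟨t, s, htA, hsB, hadjst.symm, by rw [hNu, Finset.pair_comm]⟩
      · exact absurd ⟨hsB, htB⟩ hnotbothB
  -- each BW vertex has exactly one neighbor in A
  have hBWone : ∀ u ∈ BW, (G.neighborFinset u ∩ A).card = 1 := by
    intro u hu
    obtain ⟨p, q, hpA, hqB, hpq, hNu⟩ := hBWstruct u hu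
    have : G.neighborFinset u ∩ A = {p} := by
      ext z
      rw [Finset.mem_inter, hNu, mem_singleton]
      simp only [Finset.mem_insert, mem_singleton]
      constructor
      · rintro ⟨rfl | rfl, hzA⟩
        · rfl
        · exact absurd hzA (fun h => hABdisj z h hqB)
      · rintro rfl; exact ⟨Or.inl rfl, hpA⟩
    rw [this, Finset.card_singleton]
  have hhostsum : ∑ x ∈ A, (G.neighborFinset x ∩ BW).card = BW.card := by
    rw [nbr_inter_comm G A BW]
    rw [Finset.sum_congr rfl hBWone]
    simp
  -- bad vertices
  set Bad := U.filter (fun x => (G.neighborFinset x ∩ B).card = (G.neighborFinset x ∩ BW).card)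
    with hBad
  -- for a bad vertex: full structure
  have hbadstruct : ∀ x ∈ Bad, ∃ u w : V, u ∈ BW ∧ w ∈ BW ∧
      G.neighborFinset u = {x, w} ∧ G.neighborFinset w = {x, u} ∧ G.Adj x u ∧ G.Adj x w ∧
      x ∈ A ∧ (G.neighborFinset x ∩ A).card = 0 := by
    intro x hx
    obtain ⟨hxU, hcardeq⟩ := Finset.mem_filter.mp hx
    obtain ⟨hxA, hxv, hxA0⟩ := Finset.mem_filter.mp hxU
    have hsubBW : G.neighborFinset x ∩ BW ⊆ G.neighborFinset x ∩ B :=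
      Finset.inter_subset_inter (le_refl _) hBWB
    have hinterEq : G.neighborFinset x ∩ B = G.neighborFinset x ∩ BW :=
      (Finset.eq_of_subset_of_card_le hsubBW (le_of_eq hcardeq)).symm
    have hnB1 : 1 ≤ (G.neighborFinset x ∩ B).card := by
      have hd := hdeg x
      have hd2 := hdeg2 x
      have hle := hS1le x hxA hxv
      omega
    obtain ⟨u, hu⟩ := Finset.card_pos.mp (by omega : 0 < (G.neighborFinset x ∩ B).card)
    have huBW : u ∈ BW := by
      have := hinterEq ▸ hu
      exact (Finset.mem_inter.mp this).2
    have hxu : G.Adj x u := (mem_neighborFinset G x u).mp (Finset.mem_inter.mp hu).1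
    obtain ⟨p, q, hpA, hqB, hpq, hNu⟩ := hBWstruct u huBW
    have hxmem : x ∈ G.neighborFinset u := (mem_neighborFinset G u x).mpr hxu.symm
    rw [hNu] at hxmem
    simp only [Finset.mem_insert, mem_singleton] at hxmem
    have hxp : x = p := by
      rcases hxmem with rfl | rfl
      · rfl
      · exact absurd hxA (fun h => hABdisj x h hqB)
    subst hxp
    -- q is adjacent to x, q in B, so q in BW
    have hxq : G.Adj x q := hpq
    have hqmem : q ∈ G.neighborFinset x ∩ B :=
      Finset.mem_inter.mpr ⟨(mem_neighborFinset G x q).mpr hxq, hqB⟩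
    have hqBW : q ∈ BW := (Finset.mem_inter.mp (hinterEq ▸ hqmem)).2
    -- structure of q
    obtain ⟨p', q', hp'A, hq'B, hp'q', hNq⟩ := hBWstruct q hqBW
    have huq : G.Adj u q := by
      have : q ∈ G.neighborFinset u := by rw [hNu]; simp
      exact (mem_neighborFinset G u q).mp this
    have humem : u ∈ G.neighborFinset q := (mem_neighborFinset G q u).mpr huq.symm
    have hxmem' : x ∈ G.neighborFinset q := (mem_neighborFinset G q x).mpr hxq.symm
    rw [hNq] at humem hxmem'
    simp only [Finset.mem_insert, mem_singleton] at humem hxmem'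
    have huB : u ∈ B := hBWB huBW
    have hxq' : x = p' := by
      rcases hxmem' with rfl | rfl
      · rfl
      · exact absurd hxA (fun h => hABdisj x h hq'B)
    have huq' : u = q' := by
      rcases humem with rfl | rfl
      · exact absurd hp'A (fun h => hABdisj u h huB)
      · rfl
    refine ⟨u, q, huBW, hqBW, ?_, ?_, hxu, hxq, hxA, hxA0⟩
    · rw [hNu]
    · rw [hNq, ← hxq', ← huq']
  -- at most one bad vertex
  have hBad1 : Bad.card ≤ 1 := by
    rw [Finset.card_le_one]
    intro x hx x' hx'
    by_contra hxx'
    obtain ⟨u, w, huBW, hwBW, hNu, hNw, hxu, hxw, hxA, hxA0⟩ := hbadstruct x hx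
    obtain ⟨u', w', huBW', hwBW', hNu', hNw', hxu', hxw', hxA', hxA0'⟩ := hbadstruct x' hx'
    have huB : u ∈ B := hBWB huBW
    have hwB : w ∈ B := hBWB hwBW
    have huB' : u' ∈ B := hBWB huBW'
    have hwB' : w' ∈ B := hBWB hwBW'
    -- u ≠ u'
    have hne : u ≠ u' := by
      rintro rfl
      have : x' ∈ G.neighborFinset u := (mem_neighborFinset G u x').mpr hxu'.symm
      rw [hNu] at this
      simp only [Finset.mem_insert, mem_singleton] at this
      rcases this with rfl | rfl
      · exact hxx' rfl
      · exact hABdisj x' hxA' hwB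
    have hnadj : ¬ G.Adj u u' := by
      intro h
      have : u' ∈ G.neighborFinset u := (mem_neighborFinset G u u').mpr h
      rw [hNu] at this
      simp only [Finset.mem_insert, mem_singleton] at this
      rcases this with rfl | rfl
      · exact hABdisj u' hxA huB'
      · -- u' = w : then w adj x', so x' ∈ N w = {x, u}
        have : x' ∈ G.neighborFinset u' := (mem_neighborFinset G u' x').mpr hxu'.symm
        rw [hNw] at this
        simp only [Finset.mem_insert, mem_singleton] at this
        rcases this with rfl | rfl
        · exact hxx' rfl
        · exact hABdisj x' hxA' huB
    obtain ⟨y, z, h1, h2, h3, hpq', hup, huq, hvp, hvq⟩ := sat_P3 hfree hsat hne hnadj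
    have hy : y ∈ G.neighborFinset u := (mem_neighborFinset G u y).mpr h1
    have hz : z ∈ G.neighborFinset u' := (mem_neighborFinset G u' z).mpr h3.symm
    rw [hNu] at hy
    rw [hNu'] at hz
    simp only [Finset.mem_insert, mem_singleton] at hy hz
    rcases hy with hyx | hyw <;> rcases hz with hzx | hzw
    · -- y = x, z = x' : adjacent x x' contradicts hxA0
      rw [hyx, hzx] at h2
      have hmem : x' ∈ G.neighborFinset x ∩ A := Finset.mem_inter.mpr
        ⟨(mem_neighborFinset G x x').mpr h2, hxA'⟩
      rw [Finset.card_eq_zero] at hxA0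
      rw [hxA0] at hmem
      exact absurd hmem (Finset.notMem_empty x')
    · -- y = x, z = w' : then x ∈ N w' = {x', u'}
      rw [hyx, hzw] at h2
      have hmem : x ∈ G.neighborFinset w' := (mem_neighborFinset G w' x).mpr h2.symm
      rw [hNw'] at hmem
      simp only [Finset.mem_insert, mem_singleton] at hmem
      rcases hmem with h | h
      · exact hxx' h
      · exact hABdisj x hxA (h ▸ huB')
    · -- y = w, z = x' : x' ∈ N w = {x, u}
      rw [hyw, hzx] at h2
      have hmem : x' ∈ G.neighborFinset w := (mem_neighborFinset G w x').mpr h2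
      rw [hNw] at hmem
      simp only [Finset.mem_insert, mem_singleton] at hmem
      rcases hmem with h | h
      · exact hxx' h.symm
      · exact hABdisj x' hxA' (h ▸ huB)
    · -- y = w, z = w' : w' ∈ N w = {x, u}
      rw [hyw, hzw] at h2
      have hmem : w' ∈ G.neighborFinset w := (mem_neighborFinset G w w').mpr h2
      rw [hNw] at hmem
      simp only [Finset.mem_insert, mem_singleton] at hmem
      rcases hmem with h | h
      · exact hABdisj x hxA (h ▸ hwB')
      · -- w' = u : then x' adj u, so x' ∈ N u = {x, w}
        have hx'u : G.Adj x' u := h ▸ hxw'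
        have hmem2 : x' ∈ G.neighborFinset u := (mem_neighborFinset G u x').mpr hx'u.symm
        rw [hNu] at hmem2
        simp only [Finset.mem_insert, mem_singleton] at hmem2
        rcases hmem2 with h' | h'
        · exact hxx' h'.symm
        · exact hABdisj x' hxA' (h' ▸ hwB)
  -- host bound
  have hhostbound : BW.card + U.card ≤ (∑ x ∈ A, (G.neighborFinset x ∩ B).card) + 1 := by
    have hUA : U ⊆ A := Finset.filter_subset _ _
    have hUBadA : U \ Bad ⊆ A := fun x hx => hUA (Finset.mem_sdiff.mp hx).1
    have hpt : ∀ x ∈ A, (G.neighborFinset x ∩ BW).card +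
        (if x ∈ U \ Bad then 1 else 0) ≤ (G.neighborFinset x ∩ B).card := by
      intro x hx
      have hmono : (G.neighborFinset x ∩ BW).card ≤ (G.neighborFinset x ∩ B).card :=
        Finset.card_le_card (Finset.inter_subset_inter (le_refl _) hBWB)
      by_cases hmem : x ∈ U \ Bad
      · rw [if_pos hmem]
        obtain ⟨hxU, hxnb⟩ := Finset.mem_sdiff.mp hmem
        have hne : (G.neighborFinset x ∩ B).card ≠ (G.neighborFinset x ∩ BW).card := by
          intro he
          exact hxnb (Finset.mem_filter.mpr ⟨hxU, he⟩)
        omega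
      · rw [if_neg hmem]
        omega
    have hsum1 : ∑ x ∈ A, ((G.neighborFinset x ∩ BW).card +
        (if x ∈ U \ Bad then 1 else 0)) ≤ ∑ x ∈ A, (G.neighborFinset x ∩ B).card :=
      Finset.sum_le_sum hpt
    rw [Finset.sum_add_distrib, hhostsum] at hsum1
    have hsum2 : (∑ x ∈ A, (if x ∈ U \ Bad then 1 else 0)) = (U \ Bad).card := by
      rw [Finset.sum_ite_mem]
      rw [Finset.inter_comm, Finset.inter_eq_left.mpr hUBadA]
      simp
    rw [hsum2] at hsum1
    have h3 : U.card ≤ (U \ Bad).card + Bad.card := by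
      have := Finset.le_card_sdiff Bad U
      omega
    omega
  -- B-side degrees
  have hBdeg : 3 * B.card ≤ (∑ u ∈ B, G.degree u) + BW.card := by
    have hpt : ∀ u ∈ B, 3 ≤ G.degree u + (if G.degree u = 2 then 1 else 0) := by
      intro u hu
      have := hdeg2 u
      by_cases h : G.degree u = 2
      · rw [if_pos h]; omega
      · rw [if_neg h]; omega
    have h1 := Finset.card_nsmul_le_sum B
      (fun u => G.degree u + (if G.degree u = 2 then 1 else 0)) 3 hpt
    rw [smul_eq_mul, mul_comm] at h1
    rw [Finset.sum_add_distrib] at h1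
    have h2 : (∑ u ∈ B, (if G.degree u = 2 then 1 else 0)) = BW.card := by
      rw [hBW]
      exact (Finset.card_filter _ _).symm
    omega
  -- assembly
  have hsum := sum_split S A hSA (fun x => G.degree x)
  rw [← hB] at hsum
  have hsumS : ∑ x ∈ S, G.degree x = G.degree a + G.degree b := by
    rw [hS, Finset.sum_pair hab]
  have hsumA : ∑ x ∈ A, G.degree x =
      (∑ x ∈ A, (G.neighborFinset x ∩ S).card) + ((∑ x ∈ A, (G.neighborFinset x ∩ A).card) +
        ∑ x ∈ A, (G.neighborFinset x ∩ B).card) := by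
    calc ∑ x ∈ A, G.degree x
        = ∑ x ∈ A, ((G.neighborFinset x ∩ S).card + ((G.neighborFinset x ∩ A).card +
            (G.neighborFinset x ∩ B).card)) := by
          apply Finset.sum_congr rfl; intro x hx; rw [hdeg x]; ring
      _ = _ := by rw [Finset.sum_add_distrib, Finset.sum_add_distrib]
  have hcard := card_split_univ S A hSA
  rw [← hB] at hcard
  have hScard : S.card = 2 := Finset.card_pair hab
  omega

end CaseT


section Main
variable {V : Type*} [Fintype V] [DecidableEq V] {G : SimpleGraph V} [DecidableRel G.Adj]
variable (hfree : ¬ HasC4 G)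
    (hsat : ∀ u v : V, u ≠ v → ¬ G.Adj u v → HasC4 (G ⊔ SimpleGraph.fromEdgeSet {s(u, v)}))

include hfree hsat

lemma deg_ne_zero (hn : 2 ≤ Fintype.card V) (w : V) : G.degree w ≠ 0 := by
  intro h0
  obtain ⟨u, hu⟩ := Fintype.exists_ne_of_one_lt_card (by omega) w
  have hemp : G.neighborFinset w = ∅ := Finset.card_eq_zero.mp h0
  have hnadj : ¬ G.Adj w u := by
    intro hadj
    have : u ∈ G.neighborFinset w := (mem_neighborFinset G w u).mpr hadj
    rw [hemp] at this
    exact absurd this (Finset.notMem_empty u)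
  obtain ⟨x, y, h1, -⟩ := sat_P3 hfree hsat (Ne.symm hu) hnadj
  have : x ∈ G.neighborFinset w := (mem_neighborFinset G w x).mpr h1
  rw [hemp] at this
  exact absurd this (Finset.notMem_empty x)

lemma mainCount (hn : 5 ≤ Fintype.card V) :
    3 * Fintype.card V ≤ (∑ x, G.degree x) + 6 := by
  by_cases h1 : ∃ ℓ : V, G.degree ℓ = 1
  · obtain ⟨ℓ, hℓ⟩ := h1
    have hℓ' : (G.neighborFinset ℓ).card = 1 := hℓ
    obtain ⟨w, hw⟩ := Finset.card_eq_one.mp hℓ'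
    exact caseDeg1 hfree hsat hn hw
  · have hdeg2 : ∀ u, 2 ≤ G.degree u := by
      intro u
      have hz := deg_ne_zero hfree hsat (by omega) u
      have ho : G.degree u ≠ 1 := fun hc => h1 ⟨u, hc⟩
      omega
    by_cases h2 : ∃ z x y : V, G.degree z = 2 ∧ G.Adj z x ∧ G.Adj z y ∧ x ≠ y ∧ ¬ G.Adj x y
    · obtain ⟨z, x, y, hz2, hzx, hzy, hxy, hnadj⟩ := h2
      exact caseP hfree hsat hn hdeg2 (nbr_pair hz2 hzx hzy hxy) hxy hnadj
    · push_neg at h2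
      by_cases h3 : ∃ z : V, G.degree z = 2
      · obtain ⟨z, hz2⟩ := h3
        have hz2' : (G.neighborFinset z).card = 2 := hz2
        obtain ⟨x, y, hxy, hNz⟩ := Finset.card_eq_two.mp hz2'
        have hzx : G.Adj z x := (mem_neighborFinset G z x).mp (by rw [hNz]; simp)
        have hzy : G.Adj z y := (mem_neighborFinset G z y).mp (by rw [hNz]; simp)
        have htri : ∀ w p q : V, G.degree w = 2 → G.Adj w p → G.Adj w q → p ≠ q →
            G.Adj p q := fun w p q hw hp hq hpq => h2 w p q hw hp hq hpq
        exact caseT hfree hsat hn hdeg2 htri (nbr_pair hz2 hzx hzy hxy) hxy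
          (htri z x y hz2 hzx hzy hxy)
      · push_neg at h3
        have hd3 : ∀ u : V, 3 ≤ G.degree u := by
          intro u
          have := hdeg2 u
          have := h3 u
          omega
        have hb := Finset.card_nsmul_le_sum univ (fun u => G.degree u) 3
          (fun u _ => hd3 u)
        rw [smul_eq_mul, Finset.card_univ] at hb
        omega

end Main

/-- Ollmann: every C4-saturated graph on n ≥ 5 vertices has at least ⌊(3n−5)/2⌋ edges. -/
theorem stmt0 {V : Type*} [Fintype V] (G : SimpleGraph V)
    (hn : 5 ≤ Fintype.card V)
    (hfree : ¬ HasC4 G)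
    (hsat : ∀ u v : V, u ≠ v → ¬ G.Adj u v → HasC4 (G ⊔ SimpleGraph.fromEdgeSet {s(u, v)})) :
    (3 * Fintype.card V - 5) / 2 ≤ G.edgeSet.ncard := by
  classical
  have hcount := mainCount hfree hsat hn
  have hsum : ∑ v, G.degree v = 2 * G.edgeFinset.card := G.sum_degrees_eq_twice_card_edges
  have hncard : G.edgeSet.ncard = G.edgeFinset.card := by
    rw [Set.ncard_eq_toFinset_card']
    congr 1
  rw [hncard]
  omega
end

section
/- For all k ≥ 2, the Ramsey number r(C4, K_{1,k}) is at most k + ⌊√(k−1)⌋ + 2; that is, for every 2-coloring of the edges of the complete graph on k + ⌊√(k−1)⌋ + 2 vertices with colors red and blue, there is either a red cycle of length 4 or a blue star K_{1,k}. -/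
open SimpleGraph

section FriendshipPort

open scoped Classical

namespace Theorems100

noncomputable section

open Finset SimpleGraph Matrix

universe u v

variable {V : Type u} {R : Type v} [Semiring R]

section FriendshipDef

variable (G : SimpleGraph V)

/-- This property of a graph is the hypothesis of the friendship theorem:
every pair of nonadjacent vertices has exactly one common friend,
a vertex to which both are adjacent.
-/
def Friendship [Fintype V] : Prop :=
  ∀ ⦃v w : V⦄, v ≠ w → Fintype.card (G.commonNeighbors v w) = 1

/-- A politician is a vertex that is adjacent to all other vertices.
-/
def ExistsPolitician : Prop :=
  ∃ v : V, ∀ w : V, v ≠ w → G.Adj v w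

end FriendshipDef

variable [Fintype V] {G : SimpleGraph V} {d : ℕ} (hG : Friendship G)

namespace Friendship

variable (R)

include hG in
/-- One characterization of a friendship graph is that there is exactly one walk of length 2
  between distinct vertices. These walks are counted in off-diagonal entries of the square of
  the adjacency matrix, so for a friendship graph, those entries are all 1. -/
theorem adjMatrix_sq_of_ne {v w : V} (hvw : v ≠ w) :
    (G.adjMatrix R ^ 2 : Matrix V V R) v w = 1 := by
  rw [sq, ← Nat.cast_one, ← hG hvw]
  simp only [mul_adjMatrix_apply, neighborFinset_eq_filter, adjMatrix_apply,
    sum_boole, filter_filter, and_comm, commonNeighbors,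
    Fintype.card_ofFinset (s := filter (fun x ↦ x ∈ G.neighborSet v ∩ G.neighborSet w) univ),
    Set.mem_inter_iff, mem_neighborSet]
  congr 1; refine Eq.trans ?_ Fintype.card_eq_nat_card.symm
  rw [Nat.card_coe_set_eq, Set.ncard_eq_toFinset_card']; congr 1; ext; simp

include hG in
/-- This calculation amounts to counting the number of length 3 walks between nonadjacent vertices.
  We use it to show that nonadjacent vertices have equal degrees. -/
theorem adjMatrix_pow_three_of_not_adj {v w : V} (non_adj : ¬G.Adj v w) :
    (G.adjMatrix R ^ 3 : Matrix V V R) v w = degree G v := by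
  rw [pow_succ', adjMatrix_mul_apply, degree, card_eq_sum_ones, Nat.cast_sum]
  apply sum_congr rfl
  intro x hx
  rw [adjMatrix_sq_of_ne _ hG, Nat.cast_one]
  rintro ⟨rfl⟩
  rw [mem_neighborFinset] at hx
  exact non_adj hx

variable {R}

include hG in
/-- As `v` and `w` not being adjacent implies
  `degree G v = ((G.adjMatrix R) ^ 3) v w` and `degree G w = ((G.adjMatrix R) ^ 3) v w`,
  the degrees are equal if `((G.adjMatrix R) ^ 3) v w = ((G.adjMatrix R) ^ 3) w v`

  This is true as the adjacency matrix is symmetric. -/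
theorem degree_eq_of_not_adj {v w : V} (hvw : ¬G.Adj v w) : degree G v = degree G w := by
  rw [← Nat.cast_id (G.degree v), ← Nat.cast_id (G.degree w),
    ← adjMatrix_pow_three_of_not_adj ℕ hG hvw,
    ← adjMatrix_pow_three_of_not_adj ℕ hG fun h => hvw (G.adj_symm h)]
  conv_lhs => rw [← transpose_adjMatrix]
  simp only [pow_succ _ 2, sq, ← transpose_mul, transpose_apply]
  simp only [mul_assoc]

include hG in
/-- Let `A` be the adjacency matrix of a graph `G`.
  If `G` is a friendship graph, then all of the off-diagonal entries of `A^2` are 1.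
  If `G` is `d`-regular, then all of the diagonal entries of `A^2` are `d`.
  Putting these together determines `A^2` exactly for a `d`-regular friendship graph. -/
theorem adjMatrix_sq_of_regular (hd : G.IsRegularOfDegree d) :
    G.adjMatrix R ^ 2 = of fun v w => if v = w then (d : R) else (1 : R) := by
  ext (v w); by_cases h : v = w
  · rw [h, sq, adjMatrix_mul_self_apply_self, hd]; simp
  · rw [adjMatrix_sq_of_ne R hG h, of_apply, if_neg h]

include hG in
theorem adjMatrix_sq_mod_p_of_regular {p : ℕ} (dmod : (d : ZMod p) = 1)
    (hd : G.IsRegularOfDegree d) : G.adjMatrix (ZMod p) ^ 2 = of fun _ _ => 1 := by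
  simp [adjMatrix_sq_of_regular hG hd, dmod]

section Nonempty

variable [Nonempty V]

include hG in
/-- If `G` is a friendship graph without a politician (a vertex adjacent to all others), then
  it is regular. We have shown that nonadjacent vertices of a friendship graph have the same degree,
  and if there isn't a politician, we can show this for adjacent vertices by finding a vertex
  neither is adjacent to, and then using transitivity. -/
theorem isRegularOf_not_existsPolitician (hG' : ¬ExistsPolitician G) :
    ∃ d : ℕ, G.IsRegularOfDegree d := by
  have v := Classical.arbitrary V
  use G.degree v
  intro x
  by_cases hvx : G.Adj v x; swap; · exact (degree_eq_of_not_adj hG hvx).symm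
  dsimp only [Theorems100.ExistsPolitician] at hG'
  push_neg at hG'
  rcases hG' v with ⟨w, hvw', hvw⟩
  rcases hG' x with ⟨y, hxy', hxy⟩
  by_cases hxw : G.Adj x w
  swap; · rw [degree_eq_of_not_adj hG hvw]; exact degree_eq_of_not_adj hG hxw
  rw [degree_eq_of_not_adj hG hxy]
  by_cases hvy : G.Adj v y
  swap; · exact (degree_eq_of_not_adj hG hvy).symm
  rw [degree_eq_of_not_adj hG hvw]
  apply degree_eq_of_not_adj hG
  intro hcontra
  rcases Finset.card_eq_one.mp (hG hvw') with ⟨⟨a, ha⟩, h⟩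
  have key : ∀ {x}, x ∈ G.commonNeighbors v w → x = a := by
    intro x hx
    have h' : ⟨x, hx⟩ ∈ (univ : Finset (G.commonNeighbors v w)) := mem_univ (Subtype.mk x hx)
    rw [h, mem_singleton] at h'
    injection h'
  apply hxy'
  rw [key ((mem_commonNeighbors G).mpr ⟨hvx, G.adj_symm hxw⟩),
    key ((mem_commonNeighbors G).mpr ⟨hvy, G.adj_symm hcontra⟩)]

include hG in
/-- Let `A` be the adjacency matrix of a `d`-regular friendship graph, and let `v` be a vector
  all of whose components are `1`. Then `v` is an eigenvector of `A ^ 2`, and we can compute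
  the eigenvalue to be `d * d`, or as `d + (Fintype.card V - 1)`, so those quantities must be equal.

  This essentially means that the graph has `d ^ 2 - d + 1` vertices. -/
theorem card_of_regular (hd : G.IsRegularOfDegree d) : d + (Fintype.card V - 1) = d * d := by
  have v := Classical.arbitrary V
  trans ((G.adjMatrix ℕ ^ 2) *ᵥ (fun _ => 1)) v
  · rw [adjMatrix_sq_of_regular hG hd, mulVec, dotProduct, ← insert_erase (mem_univ v)]
    simp only [sum_insert, mul_one, if_true, Nat.cast_id, eq_self_iff_true, mem_erase, not_true,
      Ne, not_false_iff, add_right_inj, false_and, of_apply]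
    rw [Finset.sum_const_nat, card_erase_of_mem (mem_univ v), mul_one]; · rfl
    intro x hx; simp [(ne_of_mem_erase hx).symm]
  · rw [sq, ← mulVec_mulVec]
    simp only [adjMatrix_mulVec_const_apply_of_regular hd, neighborFinset,
      card_neighborSet_eq_degree, hd v, Function.const_def, adjMatrix_mulVec_apply _ _ (mulVec _ _),
      mul_one, sum_const, Set.toFinset_card, smul_eq_mul, Nat.cast_id]
    rw [show Function.const V d = fun _ => d from rfl, sum_const, Set.toFinset_card,
      card_neighborSet_eq_degree, hd v, smul_eq_mul]

include hG in
/-- The size of a `d`-regular friendship graph is `1 mod (d-1)`, and thus `1 mod p` for a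
  factor `p ∣ d-1`. -/
theorem card_mod_p_of_regular {p : ℕ} (dmod : (d : ZMod p) = 1) (hd : G.IsRegularOfDegree d) :
    (Fintype.card V : ZMod p) = 1 := by
  have hpos : 0 < Fintype.card V := Fintype.card_pos_iff.mpr inferInstance
  rw [← Nat.succ_pred_eq_of_pos hpos, Nat.succ_eq_add_one, Nat.pred_eq_sub_one]
  simp only [add_eq_right, Nat.cast_add, Nat.cast_one]
  have h := congr_arg (fun n : ℕ => (n : ZMod p)) (card_of_regular hG hd)
  revert h; simp [dmod]

end Nonempty

theorem adjMatrix_sq_mul_const_one_of_regular (hd : G.IsRegularOfDegree d) :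
    G.adjMatrix R * of (fun _ _ => 1) = of (fun _ _ => (d : R)) := by
  ext x
  simp only [← hd x, degree, adjMatrix_mul_apply, sum_const, Nat.smul_one_eq_cast,
    of_apply]

theorem adjMatrix_mul_const_one_mod_p_of_regular {p : ℕ} (dmod : (d : ZMod p) = 1)
    (hd : G.IsRegularOfDegree d) :
    G.adjMatrix (ZMod p) * of (fun _ _ => 1) = of (fun _ _ => 1) := by
  rw [adjMatrix_sq_mul_const_one_of_regular hd, dmod]

include hG in
/-- Modulo a factor of `d-1`, the square and all higher powers of the adjacency matrix
  of a `d`-regular friendship graph reduce to the matrix whose entries are all 1. -/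
theorem adjMatrix_pow_mod_p_of_regular {p : ℕ} (dmod : (d : ZMod p) = 1)
    (hd : G.IsRegularOfDegree d) {k : ℕ} (hk : 2 ≤ k) :
    G.adjMatrix (ZMod p) ^ k = of (fun _ _ => 1) := by
  match k with
  | 0 | 1 => exfalso; linarith
  | k + 2 =>
    induction' k with k hind
    · exact adjMatrix_sq_mod_p_of_regular hG dmod hd
    rw [pow_succ', hind (Nat.le_add_left 2 k)]
    exact adjMatrix_mul_const_one_mod_p_of_regular dmod hd

variable [Nonempty V]

include hG in
/-- This is the main proof. Assuming that `3 ≤ d`, we take `p` to be a prime factor of `d-1`.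
  Then the `p`th power of the adjacency matrix of a `d`-regular friendship graph must have trace 1
  mod `p`, but we can also show that the trace must be the `p`th power of the trace of the original
  adjacency matrix, which is 0, a contradiction.
-/
theorem false_of_three_le_degree (hd : G.IsRegularOfDegree d) (h : 3 ≤ d) : False := by
  -- get a prime factor of d - 1
  let p : ℕ := (d - 1).minFac
  have p_dvd_d_pred := (ZMod.natCast_eq_zero_iff _ _).mpr (d - 1).minFac_dvd
  have dpos : 1 ≤ d := by omega
  have d_cast : ↑(d - 1) = (d : ℤ) - 1 := by norm_cast
  haveI : Fact p.Prime := ⟨Nat.minFac_prime (by omega)⟩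
  have hp2 : 2 ≤ p := (Fact.out (p := p.Prime)).two_le
  have dmod : (d : ZMod p) = 1 := by
    rw [← Nat.succ_pred_eq_of_pos dpos, Nat.succ_eq_add_one, Nat.pred_eq_sub_one]
    simp only [add_eq_right, Nat.cast_add, Nat.cast_one]
    exact p_dvd_d_pred
  have Vmod := card_mod_p_of_regular hG dmod hd
  -- now we reduce to a trace calculation
  have := ZMod.trace_pow_card (G.adjMatrix (ZMod p))
  contrapose! this; clear this
  -- the trace is 0 mod p when computed one way
  rw [trace_adjMatrix, zero_pow this.out.ne_zero]
  -- but the trace is 1 mod p when computed the other way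
  rw [adjMatrix_pow_mod_p_of_regular hG dmod hd hp2]
  dsimp only [Fintype.card] at Vmod
  simp only [Matrix.trace, Matrix.diag, mul_one, nsmul_eq_mul, LinearMap.coe_mk, sum_const,
    of_apply, Ne]
  rw [Vmod, ← Nat.cast_one (R := ZMod (Nat.minFac (d - 1))), ZMod.natCast_eq_zero_iff,
    Nat.dvd_one, Nat.minFac_eq_one_iff]
  omega

include hG in
/-- If `d ≤ 1`, a `d`-regular friendship graph has at most one vertex, which is
  trivially a politician. -/
theorem existsPolitician_of_degree_le_one (hd : G.IsRegularOfDegree d) (hd1 : d ≤ 1) :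
    ExistsPolitician G := by
  have sq : d * d = d := by interval_cases d <;> norm_num
  have h := card_of_regular hG hd
  rw [sq] at h
  have : Fintype.card V ≤ 1 := by
    cases hn : Fintype.card V with
    | zero => exact Nat.zero_le _
    | succ n => omega
  use Classical.arbitrary V
  intro w h; exfalso
  apply h
  apply Fintype.card_le_one_iff.mp this

include hG in
/-- If `d = 2`, a `d`-regular friendship graph has 3 vertices, so it must be complete graph,
  and all the vertices are politicians. -/
theorem neighborFinset_eq_of_degree_eq_two (hd : G.IsRegularOfDegree 2) (v : V) :
    G.neighborFinset v = Finset.univ.erase v := by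
  apply Finset.eq_of_subset_of_card_le
  · rw [Finset.subset_iff]
    intro x
    rw [mem_neighborFinset, Finset.mem_erase]
    exact fun h => ⟨(G.ne_of_adj h).symm, Finset.mem_univ _⟩
  convert_to 2 ≤ _
  · convert_to _ = Fintype.card V - 1
    · have hfr := card_of_regular hG hd
      omega
    · exact Finset.card_erase_of_mem (Finset.mem_univ _)
  · dsimp only [IsRegularOfDegree, degree] at hd
    rw [hd]

include hG in
theorem existsPolitician_of_degree_eq_two (hd : G.IsRegularOfDegree 2) : ExistsPolitician G := by
  have v := Classical.arbitrary V
  use v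
  intro w hvw
  rw [← mem_neighborFinset, neighborFinset_eq_of_degree_eq_two hG hd v, Finset.mem_erase]
  exact ⟨hvw.symm, Finset.mem_univ _⟩

include hG in
theorem existsPolitician_of_degree_le_two (hd : G.IsRegularOfDegree d) (h : d ≤ 2) :
    ExistsPolitician G := by
  interval_cases d
  iterate 2 apply existsPolitician_of_degree_le_one hG hd; norm_num
  exact existsPolitician_of_degree_eq_two hG hd

end Friendship

include hG in
/-- **Friendship theorem**: We wish to show that a friendship graph has a politician (a vertex
  adjacent to all others). We proceed by contradiction, and assume the graph has no politician.
  We have already proven that a friendship graph with no politician is `d`-regular for some `d`,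
  and now we do casework on `d`.
  If the degree is at most 2, we observe by casework that it has a politician anyway.
  If the degree is at least 3, the graph cannot exist. -/
theorem friendship_theorem [Nonempty V] : ExistsPolitician G := by
  by_contra npG
  rcases hG.isRegularOf_not_existsPolitician npG with ⟨d, dreg⟩
  cases' lt_or_ge d 3 with dle2 dge3
  · exact npG (hG.existsPolitician_of_degree_le_two dreg (Nat.lt_succ_iff.mp dle2))
  · exact hG.false_of_three_le_degree dreg dge3

end

end Theorems100

end FriendshipPort


lemma aux_mul_sub (a b : ℕ) (h : a + 1 ≤ b) : (a + 1) * a ≤ b * b - b := by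
  have h1 : (a + 1) * a + b ≤ b * b := by nlinarith
  omega

lemma aux_sq_sub (n c : ℕ) (h : n = c + 1) : n * n - n = n * c := by
  subst h
  have : (c + 1) * (c + 1) = (c + 1) * c + (c + 1) := by ring
  rw [this, Nat.add_sub_cancel]

open Finset in
/-- Parsons: r(C4, K_{1,k}) ≤ k + ⌊√(k−1)⌋ + 2. -/
theorem stmt1 (k : ℕ) (hk : 2 ≤ k) (V : Type*) [Fintype V]
    (hcard : Fintype.card V = k + Nat.sqrt (k - 1) + 2)
    (R : SimpleGraph V) :
    HasC4 R ∨ ∃ v : V, k ≤ ((Rᶜ).neighborSet v).ncard := by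
  classical
  by_contra hcon
  push_neg at hcon
  obtain ⟨hC4, hblue⟩ := hcon
  set s := Nat.sqrt (k - 1) with hs
  have hs1 : 1 ≤ s := Nat.le_sqrt.mpr (by omega)
  have hsk : k - 1 < (s + 1) * (s + 1) := Nat.lt_succ_sqrt (k - 1)
  have hss : 1 * 1 ≤ s * s := Nat.mul_le_mul hs1 hs1
  have e1 : (s + 2) * (s + 1) = s * s + 3 * s + 2 := by ring
  have e2 : (s + 1) * (s + 1) = s * s + 2 * s + 1 := by ring
  -- unique common neighbor
  have huniq : ∀ u w v v' : V, u ≠ w → R.Adj v u → R.Adj v w → R.Adj v' u → R.Adj v' w →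
      v = v' := by
    intro u w v v' huw h1 h2 h3 h4
    by_contra hne
    exact hC4 ⟨v, u, v', w, h1.ne, hne, h2.ne, (h3.ne).symm, huw, h4.ne, h1, h3.symm, h4,
      h2.symm⟩
  -- every vertex has red degree at least s + 2
  have hdeg : ∀ v : V, s + 2 ≤ R.degree v := by
    intro v
    have hb : (Rᶜ.neighborSet v).ncard = Rᶜ.degree v := by
      rw [← Nat.card_coe_set_eq, Nat.card_eq_fintype_card, card_neighborSet_eq_degree]
    have hb2 : Rᶜ.degree v < k := by rw [← hb]; exact hblue v
    have hsum : Rᶜ.degree v = Fintype.card V - 1 - R.degree v := R.degree_compl v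
    have hdlt : R.degree v < Fintype.card V := R.degree_lt_card_verts v
    omega
  have hptle : ∀ v : V, (s + 2) * (s + 1) ≤ (R.neighborFinset v).offDiag.card := by
    intro v
    rw [Finset.offDiag_card]
    exact aux_mul_sub (s + 1) _ (hdeg v)
  -- the counting set
  set S : Finset ((_ : V) × V × V) :=
    Finset.univ.sigma (fun v => (R.neighborFinset v).offDiag) with hS
  have hmemS : ∀ a ∈ S, R.Adj a.1 a.2.1 ∧ R.Adj a.1 a.2.2 ∧ a.2.1 ≠ a.2.2 := by
    intro a ha
    rw [hS, Finset.mem_sigma, Finset.mem_offDiag] at ha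
    obtain ⟨-, h1, h2, h3⟩ := ha
    exact ⟨(R.mem_neighborFinset _ _).mp h1, (R.mem_neighborFinset _ _).mp h2, h3⟩
  have hScard : S.card = ∑ v : V, (R.neighborFinset v).offDiag.card := Finset.card_sigma _ _
  have hlow : Fintype.card V * ((s + 2) * (s + 1)) ≤ S.card := by
    rw [hScard]
    calc Fintype.card V * ((s + 2) * (s + 1))
        = ∑ _v : V, (s + 2) * (s + 1) := by
          rw [Finset.sum_const, Finset.card_univ, smul_eq_mul]
      _ ≤ ∑ v : V, (R.neighborFinset v).offDiag.card :=
          Finset.sum_le_sum fun v _ => hptle v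
  have hup : S.card ≤ ((Finset.univ : Finset V).offDiag).card := by
    apply Finset.card_le_card_of_injOn (fun a => a.2)
    · intro a ha
      obtain ⟨h1, h2, h3⟩ := hmemS a ha
      simp [Finset.mem_offDiag, h3]
    · intro a ha b hb hab
      simp only [Finset.mem_coe] at ha hb
      obtain ⟨ha1, ha2, ha3⟩ := hmemS a ha
      obtain ⟨hb1, hb2, hb3⟩ := hmemS b hb
      have h2 : a.2 = b.2 := hab
      have h1 : a.1 = b.1 := by
        apply huniq a.2.1 a.2.2 a.1 b.1 ha3 ha1 ha2
        · rw [h2]; exact hb1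
        · rw [h2]; exact hb2
      exact Sigma.ext h1 (heq_of_eq h2)
  have hoffcard : ((Finset.univ : Finset V).offDiag).card
      = Fintype.card V * Fintype.card V - Fintype.card V := by
    rw [Finset.offDiag_card, Finset.card_univ]
  -- conclude k = (s+1)^2
  have hns : Fintype.card V = k + s + 2 := hcard
  have hpos : 0 < Fintype.card V := by omega
  have hsq : Fintype.card V * Fintype.card V - Fintype.card V
      = Fintype.card V * (Fintype.card V - 1) :=
    aux_sq_sub _ _ (by omega)
  have hkey : Fintype.card V * ((s + 2) * (s + 1))
      ≤ Fintype.card V * (Fintype.card V - 1) := by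
    rw [← hsq]
    exact le_trans hlow (hup.trans hoffcard.le)
  have hle : (s + 2) * (s + 1) ≤ Fintype.card V - 1 :=
    Nat.le_of_mul_le_mul_left hkey hpos
  have hkeq : k = s * s + 2 * s + 1 := by omega
  have hc1 : Fintype.card V - 1 = (s + 2) * (s + 1) := by omega
  -- equality of cardinalities, hence surjectivity
  have hcards : ((Finset.univ : Finset V).offDiag).card ≤ S.card := by
    rw [hoffcard, hsq, hc1]
    exact hlow
  -- friendship
  have hfr : Theorems100.Friendship R := by
    intro v w hvw
    have hvwmem : (v, w) ∈ (Finset.univ : Finset V).offDiag := by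
      simp [Finset.mem_offDiag, hvw]
    obtain ⟨a, ha, hfa⟩ := Finset.surj_on_of_inj_on_of_card_le (fun a _ => a.2)
      (fun a ha => by
        obtain ⟨h1, h2, h3⟩ := hmemS a ha
        simp [Finset.mem_offDiag, h3])
      (fun a b ha hb hab => by
        obtain ⟨ha1, ha2, ha3⟩ := hmemS a ha
        obtain ⟨hb1, hb2, hb3⟩ := hmemS b hb
        have h2 : a.2 = b.2 := hab
        have h1 : a.1 = b.1 := by
          apply huniq a.2.1 a.2.2 a.1 b.1 ha3 ha1 ha2
          · rw [h2]; exact hb1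
          · rw [h2]; exact hb2
        exact Sigma.ext h1 (heq_of_eq h2))
      hcards (v, w) hvwmem
    obtain ⟨h1, h2, h3⟩ := hmemS a ha
    have hv : R.Adj a.1 v := by rw [show v = a.2.1 from congrArg Prod.fst hfa]; exact h1
    have hw : R.Adj a.1 w := by rw [show w = a.2.2 from congrArg Prod.snd hfa]; exact h2
    rw [Fintype.card_eq_one_iff]
    refine ⟨⟨a.1, by simp [SimpleGraph.mem_commonNeighbors, hv.symm, hw.symm]⟩, ?_⟩
    rintro ⟨y, hy⟩
    rw [SimpleGraph.mem_commonNeighbors] at hy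
    exact Subtype.ext (huniq v w y a.1 hvw hy.1.symm hy.2.symm hv hw)
  -- politician
  have hne : Nonempty V := by
    rw [← Fintype.card_pos_iff]; omega
  obtain ⟨p, hp⟩ := Theorems100.friendship_theorem hfr
  -- degree of the politician
  have hpdeg : R.degree p = Fintype.card V - 1 := by
    have hsub : Finset.univ.erase p ⊆ R.neighborFinset p := by
      intro w hw
      rw [Finset.mem_erase] at hw
      rw [R.mem_neighborFinset]
      exact hp w (Ne.symm hw.1)
    have h1 : Fintype.card V - 1 ≤ R.degree p := by
      have := Finset.card_le_card hsub
      rwa [Finset.card_erase_of_mem (Finset.mem_univ p), Finset.card_univ] at this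
    have h2 : R.degree p < Fintype.card V := R.degree_lt_card_verts p
    omega
  -- per-vertex equality of the count
  have hsum_eq : ∑ _v : V, (s + 2) * (s + 1)
      = ∑ v : V, (R.neighborFinset v).offDiag.card := by
    have h1 : ∑ _v : V, (s + 2) * (s + 1)
        = Fintype.card V * ((s + 2) * (s + 1)) := by
      rw [Finset.sum_const, Finset.card_univ, smul_eq_mul]
    have h2 : ∑ v : V, (R.neighborFinset v).offDiag.card
        ≤ Fintype.card V * ((s + 2) * (s + 1)) := by
      rw [← hScard, ← hc1, ← hsq]
      exact hup.trans hoffcard.le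
    omega
  have hple : (s + 2) * (s + 1) = (R.neighborFinset p).offDiag.card :=
    (Finset.sum_eq_sum_iff_of_le (fun v _ => hptle v)).mp hsum_eq p (Finset.mem_univ p)
  -- contradiction
  rw [Finset.offDiag_card] at hple
  have hdp : (R.neighborFinset p).card = R.degree p := rfl
  rw [hdp, hpdeg, hc1] at hple
  set D := (s + 2) * (s + 1) with hD
  have hD6 : 6 ≤ D := by omega
  have hDD : 6 * D ≤ D * D := Nat.mul_le_mul_right D hD6
  omega
end

section
/- Let k ≥ 2 and let G be a (C4, K_{1,k})-co-critical graph on n ≥ k + ⌊√(k−1)⌋ + 2 vertices, and let τ be a critical coloring of G with red class E_r and blue class E_b. If S ⊆ V(G) is the set of vertices whose degree in the blue subgraph is at most k−2, then S is a clique in G. -/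
open SimpleGraph

theorem stmt3 {V : Type*} [Fintype V] (k : ℕ) (hk : 2 ≤ k) (G : SimpleGraph V)
    (hn : k + Nat.sqrt (k - 1) + 2 ≤ Fintype.card V)
    (hG : CoCritical k G) (R : SimpleGraph V) (hτ : CriticalColoring k G R) :
    {v : V | ((G \ R).neighborSet v).ncard ≤ k - 2}.Pairwise G.Adj := by
  classical
  intro u hu v hv huv
  by_contra hadj
  obtain ⟨-, -, hcrit⟩ := hG
  refine hcrit u v huv hadj ⟨R, hτ.1.trans le_sup_left, hτ.2.1, ?_⟩
  intro w
  have key : ∀ x, ((G ⊔ fromEdgeSet {s(u, v)}) \ R).Adj w x ↔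
      (G \ R).Adj w x ∨ ((w = u ∧ x = v) ∨ (w = v ∧ x = u)) := by
    intro x
    simp only [SimpleGraph.sdiff_adj, SimpleGraph.sup_adj, SimpleGraph.fromEdgeSet_adj,
      Set.mem_singleton_iff, Sym2.eq, Sym2.rel_iff', Prod.mk.injEq, Prod.swap_prod_mk]
    constructor
    · rintro ⟨h1 | ⟨(⟨rfl, rfl⟩ | ⟨rfl, rfl⟩), hne⟩, h2⟩
      · exact Or.inl ⟨h1, h2⟩
      · exact Or.inr (Or.inl ⟨rfl, rfl⟩)
      · exact Or.inr (Or.inr ⟨rfl, rfl⟩)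
    · rintro (⟨h1, h2⟩ | ⟨rfl, rfl⟩ | ⟨rfl, rfl⟩)
      · exact ⟨Or.inl h1, h2⟩
      · refine ⟨Or.inr ⟨Or.inl ⟨rfl, rfl⟩, huv⟩, fun hR => hadj (hτ.1 hR)⟩
      · refine ⟨Or.inr ⟨Or.inr ⟨rfl, rfl⟩, huv.symm⟩, fun hR => hadj ((hτ.1 hR).symm)⟩
  by_cases hwu : w = u
  · subst hwu
    have hsub : ((G ⊔ fromEdgeSet {s(w, v)}) \ R).neighborSet w ⊆
        (G \ R).neighborSet w ∪ {v} := by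
      intro x hx
      rcases (key x).1 hx with h | ⟨_, rfl⟩ | ⟨h, _⟩
      · exact Or.inl h
      · exact Or.inr rfl
      · exact absurd h huv
    have := Set.ncard_le_ncard hsub (Set.toFinite _)
    have h2 := Set.ncard_union_le ((G \ R).neighborSet w) {v}
    have h3 : ({v} : Set V).ncard = 1 := Set.ncard_singleton v
    have := hu
    simp only [Set.mem_setOf_eq] at this
    omega
  · by_cases hwv : w = v
    · subst hwv
      have hsub : ((G ⊔ fromEdgeSet {s(u, w)}) \ R).neighborSet w ⊆
          (G \ R).neighborSet w ∪ {u} := by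
        intro x hx
        rcases (key x).1 hx with h | ⟨h, _⟩ | ⟨_, rfl⟩
        · exact Or.inl h
        · exact absurd h.symm huv
        · exact Or.inr rfl
      have := Set.ncard_le_ncard hsub (Set.toFinite _)
      have h2 := Set.ncard_union_le ((G \ R).neighborSet w) {u}
      have h3 : ({u} : Set V).ncard = 1 := Set.ncard_singleton u
      have := hv
      simp only [Set.mem_setOf_eq] at this
      omega
    · have heq : ((G ⊔ fromEdgeSet {s(u, v)}) \ R).neighborSet w =
          (G \ R).neighborSet w := by
        ext x
        rw [SimpleGraph.mem_neighborSet, key x]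
        constructor
        · rintro (h | ⟨rfl, -⟩ | ⟨rfl, -⟩)
          · exact h
          · exact absurd rfl hwu
          · exact absurd rfl hwv
        · exact Or.inl
      rw [heq]
      exact hτ.2.2 w
end

section
/- Let k ≥ 2, let G be a (C4, K_{1,k})-co-critical graph with a critical coloring τ (red/blue), and let uv be an edge of G that lies in at least 2k−2 triangles of G (i.e., |N(u) ∩ N(v)| ≥ 2k−2). Then uv is colored red and |N_r(u) ∩ N_r(v)| ≤ 1, where N_r denotes neighborhood in the red subgraph. -/
open SimpleGraph

theorem stmt5 {V : Type*} [Fintype V] (k : ℕ) (hk : 2 ≤ k) (G : SimpleGraph V)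
    (hG : CoCritical k G) (R : SimpleGraph V) (hτ : CriticalColoring k G R)
    (u v : V) (huv : G.Adj u v)
    (htri : 2 * k - 2 ≤ (G.neighborSet u ∩ G.neighborSet v).ncard) :
    R.Adj u v ∧ (R.neighborSet u ∩ R.neighborSet v).ncard ≤ 1 := by
  obtain ⟨hRG, hnoC4, hbdeg⟩ := hτ
  have huvne : u ≠ v := huv.ne
  -- two common red neighbors of u and v would give a red C4
  have hC4 : ∀ w w' : V, w ≠ w' → R.Adj u w → R.Adj v w → R.Adj u w' → R.Adj v w' →
      False := by
    intro w w' hww' h1 h2 h3 h4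
    exact hnoC4 ⟨u, w, v, w', h1.ne, huvne, h3.ne, h2.ne', hww', h4.ne,
      h1, h2.symm, h4, h3.symm⟩
  have hT : (R.neighborSet u ∩ R.neighborSet v).ncard ≤ 1 := by
    rw [Set.ncard_le_one (Set.toFinite _)]
    intro a ha b hb
    by_contra hab
    exact hC4 a b hab ha.1 ha.2 hb.1 hb.2
  refine ⟨?_, hT⟩
  by_contra hnr
  set S := G.neighborSet u ∩ G.neighborSet v with hS
  set Bu := (G \ R).neighborSet u ∩ S with hBu
  set Bv := (G \ R).neighborSet v ∩ S with hBv
  set T := R.neighborSet u ∩ R.neighborSet v with hTdef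
  have hsub : S ⊆ Bu ∪ Bv ∪ T := by
    intro w hw
    have hw1 : G.Adj u w := hw.1
    have hw2 : G.Adj v w := hw.2
    by_cases h1 : R.Adj u w
    · by_cases h2 : R.Adj v w
      · exact Or.inr ⟨h1, h2⟩
      · exact Or.inl (Or.inr ⟨⟨hw2, h2⟩, hw⟩)
    · exact Or.inl (Or.inl ⟨⟨hw1, h1⟩, hw⟩)
  have hvS : v ∉ S := fun h => G.loopless.irrefl v h.2
  have hvBu : v ∉ Bu := fun h => hvS h.2
  have hvBv : v ∉ Bv := fun h => hvS h.2
  have huS : u ∉ S := fun h => G.loopless.irrefl u h.1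
  have huBu : u ∉ Bu := fun h => huS h.2
  have huBv : u ∉ Bv := fun h => huS h.2
  have hBuCard : Bu.ncard + 1 < k := by
    have hins : insert v Bu ⊆ (G \ R).neighborSet u := by
      intro w hw
      rcases hw with rfl | hw
      · exact ⟨huv, hnr⟩
      · exact hw.1
    have h1 : (insert v Bu).ncard = Bu.ncard + 1 :=
      Set.ncard_insert_of_notMem hvBu (Set.toFinite _)
    have h2 : (insert v Bu).ncard ≤ ((G \ R).neighborSet u).ncard :=
      Set.ncard_le_ncard hins (Set.toFinite _)
    have := hbdeg u
    omega
  have hBvCard : Bv.ncard + 1 < k := by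
    have hins : insert u Bv ⊆ (G \ R).neighborSet v := by
      intro w hw
      rcases hw with rfl | hw
      · exact ⟨huv.symm, fun h => hnr h.symm⟩
      · exact hw.1
    have h1 : (insert u Bv).ncard = Bv.ncard + 1 :=
      Set.ncard_insert_of_notMem huBv (Set.toFinite _)
    have h2 : (insert u Bv).ncard ≤ ((G \ R).neighborSet v).ncard :=
      Set.ncard_le_ncard hins (Set.toFinite _)
    have := hbdeg v
    omega
  have hScard : S.ncard ≤ Bu.ncard + Bv.ncard + T.ncard := by
    calc S.ncard ≤ (Bu ∪ Bv ∪ T).ncard := Set.ncard_le_ncard hsub (Set.toFinite _)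
    _ ≤ (Bu ∪ Bv).ncard + T.ncard := Set.ncard_union_le _ _
    _ ≤ Bu.ncard + Bv.ncard + T.ncard := by
        have := Set.ncard_union_le Bu Bv
        omega
  omega
end

section
/- Let k ≥ 2 and let G be a (C4, K_{1,k})-co-critical graph with a critical coloring. Then every edge uv of G satisfies |N(u) ∩ N(v)| ≤ 2k−1; that is, no edge lies in 2k or more triangles. -/
open SimpleGraph

theorem stmt6 {V : Type*} [Fintype V] (k : ℕ) (hk : 2 ≤ k) (G : SimpleGraph V)
    (hG : CoCritical k G) (R : SimpleGraph V) (hτ : CriticalColoring k G R)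
    (u v : V) (huv : G.Adj u v) :
    (G.neighborSet u ∩ G.neighborSet v).ncard ≤ 2 * k - 1 := by
  obtain ⟨hRG, hC4, hstar⟩ := hτ
  by_contra hcon
  push_neg at hcon
  set S := G.neighborSet u ∩ G.neighborSet v with hSdef
  have hSfin : S.Finite := Set.toFinite _
  have hS2k : 2 * k ≤ S.ncard := by omega
  set A := S ∩ R.neighborSet u with hAdef
  set B := S ∩ R.neighborSet v with hBdef
  have hAsub : A ⊆ S := Set.inter_subset_left
  have hBsub : B ⊆ S := Set.inter_subset_left
  have hdiffA : S \ A ⊆ (G \ R).neighborSet u := by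
    rintro w ⟨hwS, hwA⟩
    have hGuw : G.Adj u w := hwS.1
    have hRuw : ¬ R.Adj u w := fun h => hwA ⟨hwS, h⟩
    exact SimpleGraph.sdiff_adj .. |>.mpr ⟨hGuw, hRuw⟩
  have hdiffB : S \ B ⊆ (G \ R).neighborSet v := by
    rintro w ⟨hwS, hwB⟩
    have hGvw : G.Adj v w := hwS.2
    have hRvw : ¬ R.Adj v w := fun h => hwB ⟨hwS, h⟩
    exact SimpleGraph.sdiff_adj .. |>.mpr ⟨hGvw, hRvw⟩
  have hdA : (S \ A).ncard < k :=
    lt_of_le_of_lt (Set.ncard_le_ncard hdiffA (Set.toFinite _)) (hstar u)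
  have hdB : (S \ B).ncard < k :=
    lt_of_le_of_lt (Set.ncard_le_ncard hdiffB (Set.toFinite _)) (hstar v)
  have heqA : (S \ A).ncard + A.ncard = S.ncard :=
    Set.ncard_diff_add_ncard_of_subset hAsub hSfin
  have heqB : (S \ B).ncard + B.ncard = S.ncard :=
    Set.ncard_diff_add_ncard_of_subset hBsub hSfin
  have hunion : (A ∪ B).ncard ≤ S.ncard :=
    Set.ncard_le_ncard (Set.union_subset hAsub hBsub) hSfin
  have hie : A.ncard + B.ncard = (A ∩ B).ncard + (A ∪ B).ncard := by
    rw [Set.ncard_inter_add_ncard_union A B (Set.toFinite _) (Set.toFinite _)]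
  have h2 : 1 < (A ∩ B).ncard := by omega
  obtain ⟨w₁, hw₁, w₂, hw₂, hne⟩ := (Set.one_lt_ncard (Set.toFinite _)).mp h2
  obtain ⟨⟨hw₁S, hw₁u⟩, ⟨_, hw₁v⟩⟩ := hw₁
  obtain ⟨⟨hw₂S, hw₂u⟩, ⟨_, hw₂v⟩⟩ := hw₂
  exact hC4 ⟨u, w₁, v, w₂, (hw₁S.1 : G.Adj u w₁).ne, huv.ne, (hw₂S.1 : G.Adj u w₂).ne,
    (hw₁S.2 : G.Adj v w₁).ne', hne, (hw₂S.2 : G.Adj v w₂).ne,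
    hw₁u, (hw₁v : R.Adj v w₁).symm, hw₂v, (hw₂u : R.Adj u w₂).symm⟩
end

section
/- Let k ≥ 2 and let G be a (C4, K_{1,k})-co-critical graph with a critical coloring with red and blue classes. If an edge uv lies in exactly 2k−1 triangles of G, then |N_r(u) ∩ N_r(v)| = 1, |N_b(u) ∩ (N(u) ∩ N(v))| = |N_b(v) ∩ (N(u) ∩ N(v))| = k−1, and N_b(u) ∩ N_b(v) = ∅, where N_r and N_b denote red and blue neighborhoods. -/
open SimpleGraph

theorem stmt7 {V : Type*} [Fintype V] (k : ℕ) (hk : 2 ≤ k) (G : SimpleGraph V)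
    (hG : CoCritical k G) (R : SimpleGraph V) (hτ : CriticalColoring k G R)
    (u v : V) (huv : G.Adj u v)
    (htri : (G.neighborSet u ∩ G.neighborSet v).ncard = 2 * k - 1) :
    (R.neighborSet u ∩ R.neighborSet v).ncard = 1 ∧
    ((G \ R).neighborSet u ∩ (G.neighborSet u ∩ G.neighborSet v)).ncard = k - 1 ∧
    ((G \ R).neighborSet v ∩ (G.neighborSet u ∩ G.neighborSet v)).ncard = k - 1 ∧
    (G \ R).neighborSet u ∩ (G \ R).neighborSet v = ∅ := by
  obtain ⟨hRG, hC4, hblue⟩ := hτ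
  have hne : u ≠ v := huv.ne
  set T := G.neighborSet u ∩ G.neighborSet v with hT
  set RR := R.neighborSet u ∩ R.neighborSet v with hRRdef
  set A := (G \ R).neighborSet u ∩ T with hAdef
  set B := (G \ R).neighborSet v ∩ T with hBdef
  -- RR has at most one element (no red C4)
  have hRR1 : RR.ncard ≤ 1 := by
    rw [Set.ncard_le_one (Set.toFinite _)]
    rintro w1 ⟨h1u, h1v⟩ w2 ⟨h2u, h2v⟩
    rw [SimpleGraph.mem_neighborSet] at h1u h1v h2u h2v
    by_contra hww
    exact hC4 ⟨u, w1, v, w2, h1u.ne, hne, h2u.ne, h1v.ne', hww, h2v.ne,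
      h1u, h1v.symm, h2v, h2u.symm⟩
  -- cover
  have hcover : T ⊆ RR ∪ (A ∪ B) := by
    rintro w ⟨hwu, hwv⟩
    rw [SimpleGraph.mem_neighborSet] at hwu hwv
    by_cases h1 : R.Adj u w
    · by_cases h2 : R.Adj v w
      · exact Or.inl ⟨h1, h2⟩
      · refine Or.inr (Or.inr ⟨?_, ⟨hwu, hwv⟩⟩)
        rw [SimpleGraph.mem_neighborSet, SimpleGraph.sdiff_adj]
        exact ⟨hwv, h2⟩
    · refine Or.inr (Or.inl ⟨?_, ⟨hwu, hwv⟩⟩)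
      rw [SimpleGraph.mem_neighborSet, SimpleGraph.sdiff_adj]
      exact ⟨hwu, h1⟩
  have h1 : T.ncard ≤ (RR ∪ (A ∪ B)).ncard := Set.ncard_le_ncard hcover (Set.toFinite _)
  have h2 : (RR ∪ (A ∪ B)).ncard ≤ RR.ncard + (A ∪ B).ncard := Set.ncard_union_le _ _
  have h3 : (A ∪ B).ncard + (A ∩ B).ncard = A.ncard + B.ncard :=
    Set.ncard_union_add_ncard_inter A B (Set.toFinite _) (Set.toFinite _)
  have hAk : A.ncard < k :=
    lt_of_le_of_lt (Set.ncard_le_ncard Set.inter_subset_left (Set.toFinite _)) (hblue u)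
  have hBk : B.ncard < k :=
    lt_of_le_of_lt (Set.ncard_le_ncard Set.inter_subset_left (Set.toFinite _)) (hblue v)
  have hz : (A ∩ B).ncard = 0 ∧ RR.ncard = 1 ∧ A.ncard = k - 1 ∧ B.ncard = k - 1 := by
    omega
  refine ⟨hz.2.1, hz.2.2.1, hz.2.2.2, ?_⟩
  have hAB : (G \ R).neighborSet u ∩ (G \ R).neighborSet v = A ∩ B := by
    ext w
    simp only [hAdef, hBdef, hT, Set.mem_inter_iff, SimpleGraph.mem_neighborSet,
      SimpleGraph.sdiff_adj]
    tauto
  rw [hAB, ← Set.ncard_eq_zero (Set.toFinite _)]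
  exact hz.1
end

section
/- Let G be a (C4, K_{1,k})-co-critical graph (k ≥ 2), and let τ be a critical coloring of G whose red class E_r has maximum size among all critical colorings of G. Then the red subgraph G_r is C4-saturated in the following sense: G_r is C4-free, and for every edge e in the complement of G, the graph G_r + e contains a C4. -/
open SimpleGraph

theorem stmt12 {V : Type*} [Fintype V] (k : ℕ) (hk : 2 ≤ k) (G : SimpleGraph V)
    (hG : CoCritical k G) (R : SimpleGraph V) (hτ : CriticalColoring k G R)
    (hmax : ∀ R' : SimpleGraph V, CriticalColoring k G R' →
      R'.edgeSet.ncard ≤ R.edgeSet.ncard) :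
    ¬ HasC4 R ∧ ∀ u v : V, u ≠ v → ¬ G.Adj u v →
      HasC4 (R ⊔ SimpleGraph.fromEdgeSet {s(u, v)}) := by
  obtain ⟨hne, _, hcc⟩ := hG
  obtain ⟨hle, hc4, hblue⟩ := hτ
  refine ⟨hc4, ?_⟩
  intro u v huv hadj
  by_contra hno
  apply hcc u v huv hadj
  refine ⟨R ⊔ SimpleGraph.fromEdgeSet {s(u, v)}, sup_le_sup_right hle _, hno, ?_⟩
  intro w
  refine lt_of_le_of_lt (Set.ncard_le_ncard ?_ (Set.toFinite _)) (hblue w)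
  intro x hx
  simp only [SimpleGraph.mem_neighborSet, SimpleGraph.sdiff_adj, SimpleGraph.sup_adj] at hx ⊢
  tauto
end

section
/- For all k ≥ 3 and n ≥ 3k + 4, there exists a (C4, K_{1,k})-co-critical graph G on n vertices with at most (k+2)n/2 + k edges. -/
open SimpleGraph

open scoped Classical

namespace Stmt17Aux

open Finset

variable {n k : ℕ}

/-- Neighbourhood as a filter-Finset (avoids Fintype-instance headaches). -/
noncomputable def nf (G : SimpleGraph (Fin n)) (v : Fin n) : Finset (Fin n) :=
  univ.filter (fun w => G.Adj v w)

lemma mem_nf {G : SimpleGraph (Fin n)} {v w : Fin n} : w ∈ nf G v ↔ G.Adj v w := by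
  simp [nf]

lemma nf_eq (G : SimpleGraph (Fin n)) (v : Fin n) : G.neighborFinset v = nf G v := by
  ext w
  simp [nf, mem_neighborFinset]

lemma ncard_nf (G : SimpleGraph (Fin n)) (v : Fin n) :
    (G.neighborSet v).ncard = (nf G v).card := by
  rw [Set.ncard_eq_toFinset_card', Set.toFinset_card, card_neighborSet_eq_degree]
  rw [show G.degree v = (G.neighborFinset v).card from rfl, nf_eq]

lemma sum_nf_card (G : SimpleGraph (Fin n)) :
    ∑ v, (nf G v).card = 2 * G.edgeFinset.card := by
  rw [← G.sum_degrees_eq_twice_card_edges]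
  refine Finset.sum_congr rfl fun v _ => ?_
  rw [show G.degree v = (G.neighborFinset v).card from rfl, nf_eq]

lemma card_ge_of_val_range (hn0 : 0 < n) (s : Finset (Fin n)) (lo hi : ℕ) (hhi : hi ≤ n)
    (h : ∀ i, lo ≤ i → i < hi → ∀ hi' : i < n, (⟨i, hi'⟩ : Fin n) ∈ s) :
    hi - lo ≤ s.card := by
  have : (Finset.Ico lo hi).card ≤ s.card := by
    apply Finset.card_le_card_of_injOn (fun i => (⟨i % n, Nat.mod_lt i hn0⟩ : Fin n))
    · intro i hi2
      rw [Finset.mem_coe, Finset.mem_Ico] at hi2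
      have hi' : i < n := by omega
      have hin : (⟨i % n, Nat.mod_lt i hn0⟩ : Fin n) = ⟨i, hi'⟩ := by
        apply Fin.ext
        simp [Nat.mod_eq_of_lt hi']
      simp only [Finset.mem_coe]
      rw [hin]
      exact h i hi2.1 hi2.2 hi'
    · intro i hi j hj hij
      rw [Finset.mem_coe, Finset.mem_Ico] at hi hj
      have : i % n = j % n := by
        have := congrArg Fin.val hij
        simpa using this
      rwa [Nat.mod_eq_of_lt (by omega), Nat.mod_eq_of_lt (by omega)] at this
  simpa using this

lemma card_le_of_val_range (s : Finset (Fin n)) (lo hi : ℕ)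
    (h : ∀ v ∈ s, lo ≤ v.val ∧ v.val < hi) : s.card ≤ hi - lo := by
  have : s.card ≤ (Finset.Ico lo hi).card := by
    apply Finset.card_le_card_of_injOn Fin.val
    · intro v hv
      exact Finset.mem_Ico.mpr (h v hv)
    · exact Fin.val_injective.injOn
  simpa using this

lemma common_red_le_one (R : SimpleGraph (Fin n)) (hC4 : ¬ HasC4 R) {a b : Fin n} (hab : a ≠ b) :
    (nf R a ∩ nf R b).card ≤ 1 := by
  by_contra h
  push_neg at h
  obtain ⟨u, hu, w, hw, huw⟩ := Finset.one_lt_card.mp h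
  simp only [Finset.mem_inter, mem_nf] at hu hw
  exact hC4 ⟨a, u, b, w, hu.1.ne, hab, hw.1.ne, hu.2.ne', huw, hw.2.ne,
    hu.1, hu.2.symm, hw.2, hw.1.symm⟩

lemma nf_split (G R : SimpleGraph (Fin n)) (hRG : R ≤ G) (v : Fin n) :
    (nf G v).card = (nf R v).card + (nf (G \ R) v).card := by
  have hun : nf G v = nf R v ∪ nf (G \ R) v := by
    ext w
    simp only [mem_nf, sdiff_adj, Finset.mem_union]
    constructor
    · intro h
      by_cases hr : R.Adj v w
      · exact Or.inl hr
      · exact Or.inr ⟨h, hr⟩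
    · rintro (h | ⟨h, -⟩)
      · exact hRG h
      · exact h
  have hdis : Disjoint (nf R v) (nf (G \ R) v) := by
    rw [Finset.disjoint_left]
    intro w hw hw2
    simp only [mem_nf, sdiff_adj] at hw hw2
    exact hw2.2 hw
  rw [hun, Finset.card_union_of_disjoint hdis]

/-- In any critical coloring, two distinct vertices have at most `2k-1` common neighbours. -/
lemma commons_le {G R : SimpleGraph (Fin n)} (hcrit : CriticalColoring k G R)
    {x0 x1 : Fin n} (h01 : x0 ≠ x1) :
    (nf G x0 ∩ nf G x1).card + 1 ≤ 2*k := by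
  obtain ⟨hRG, hC4, hblue⟩ := hcrit
  have hBdeg : ∀ v, (nf (G \ R) v).card < k := by
    intro v
    have := hblue v
    rwa [ncard_nf] at this
  set c := nf G x0 ∩ nf G x1 with hc
  set A1 := c ∩ nf (G \ R) x0 with hA1
  set A2 := c ∩ nf (G \ R) x1 with hA2
  set A3 := c ∩ (nf R x0 ∩ nf R x1) with hA3
  have hcover : c ⊆ A1 ∪ (A2 ∪ A3) := by
    intro w hw
    have hw0 : G.Adj x0 w := mem_nf.mp (Finset.mem_inter.mp hw).1
    have hw1 : G.Adj x1 w := mem_nf.mp (Finset.mem_inter.mp hw).2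
    simp only [hA1, hA2, hA3, Finset.mem_union, Finset.mem_inter, mem_nf, sdiff_adj]
    by_cases h0 : R.Adj x0 w
    · by_cases h1 : R.Adj x1 w
      · exact Or.inr (Or.inr ⟨hw, h0, h1⟩)
      · exact Or.inr (Or.inl ⟨hw, hw1, h1⟩)
    · exact Or.inl ⟨hw, hw0, h0⟩
  have h1 : A1.card < k := lt_of_le_of_lt (Finset.card_le_card (Finset.inter_subset_right)) (hBdeg x0)
  have h2 : A2.card < k := lt_of_le_of_lt (Finset.card_le_card (Finset.inter_subset_right)) (hBdeg x1)
  have h3 : A3.card ≤ 1 := le_trans (Finset.card_le_card Finset.inter_subset_right)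
    (common_red_le_one R hC4 h01)
  have hcc := Finset.card_le_card hcover
  have hu := Finset.card_union_le A1 (A2 ∪ A3)
  have hu2 := Finset.card_union_le A2 A3
  omega

lemma top_not_colorable (hk : 3 ≤ k) (hn : 3 * k + 4 ≤ n) :
    ¬ ∃ R, CriticalColoring k (⊤ : SimpleGraph (Fin n)) R := by
  rintro ⟨R, hcrit⟩
  have h0n : (0:ℕ) < n := by omega
  have h1n : (1:ℕ) < n := by omega
  set x0 : Fin n := ⟨0, h0n⟩ with hx0
  set x1 : Fin n := ⟨1, h1n⟩ with hx1
  have h01 : x0 ≠ x1 := by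
    intro h
    have := congrArg Fin.val h
    simp [hx0, hx1] at this
  have hle := commons_le hcrit h01
  have heq : (nf (⊤ : SimpleGraph (Fin n)) x0 ∩ nf (⊤ : SimpleGraph (Fin n)) x1)
      = (univ \ {x0, x1}) := by
    ext w
    simp only [Finset.mem_inter, mem_nf, top_adj, Finset.mem_sdiff,
      Finset.mem_univ, Finset.mem_insert, Finset.mem_singleton, true_and]
    constructor
    · rintro ⟨hw0, hw1⟩
      push_neg
      exact ⟨fun h => hw0 h.symm, fun h => hw1 h.symm⟩
    · intro h
      push_neg at h
      exact ⟨fun he => h.1 he.symm, fun he => h.2 he.symm⟩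
  rw [heq] at hle
  have hcard : (univ \ ({x0, x1} : Finset (Fin n))).card = n - 2 := by
    rw [Finset.card_sdiff_of_subset (Finset.subset_univ _), Finset.card_univ, Fintype.card_fin]
    have : ({x0, x1} : Finset (Fin n)).card = 2 := by
      rw [Finset.card_insert_of_notMem (by simpa using h01), Finset.card_singleton]
    rw [this]
  omega

def Hgr (n k : ℕ) : SimpleGraph (Fin n) where
  Adj a b := a ≠ b ∧ (a.val = 0 ∨ b.val = 0 ∨
      (a.val = 1 ∧ 2 ≤ b.val ∧ b.val ≤ 2*k) ∨ (b.val = 1 ∧ 2 ≤ a.val ∧ a.val ≤ 2*k))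
  symm := by
    constructor
    rintro a b ⟨hne, h⟩
    exact ⟨hne.symm, by tauto⟩
  loopless := by constructor; rintro a ⟨hne, -⟩; exact hne rfl

lemma ncard_edgeSet (G : SimpleGraph (Fin n)) : G.edgeSet.ncard = G.edgeFinset.card := by
  rw [← SimpleGraph.coe_edgeFinset, Set.ncard_coe_finset]

lemma main_bound (hk : 3 ≤ k) (hn : 3 * k + 4 ≤ n)
    (G : SimpleGraph (Fin n)) (hHG : Hgr n k ≤ G)
    (R : SimpleGraph (Fin n)) (hcrit : CriticalColoring k G R) :
    2 * G.edgeSet.ncard + 2 ≤ (k + 2) * n := by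
  rw [ncard_edgeSet]
  obtain ⟨k', rfl⟩ : ∃ k', k = k' + 1 := ⟨k - 1, by omega⟩
  obtain ⟨hRG, hC4, hblue⟩ := hcrit
  have h0n : (0:ℕ) < n := by omega
  have h1n : (1:ℕ) < n := by omega
  set x0 : Fin n := ⟨0, h0n⟩ with hx0
  set x1 : Fin n := ⟨1, h1n⟩ with hx1
  have hx0v : x0.val = 0 := rfl
  have hx1v : x1.val = 1 := rfl
  have h01 : x0 ≠ x1 := by
    intro h
    have := congrArg Fin.val h
    simp [hx0, hx1] at this
  have hBdeg : ∀ v, (nf (G \ R) v).card ≤ k' := by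
    intro v
    have := hblue v
    rw [ncard_nf] at this
    omega
  have hGx0 : ∀ v : Fin n, v ≠ x0 → G.Adj x0 v := by
    intro v hv
    exact hHG ⟨fun h => hv h.symm, Or.inl hx0v⟩
  set c := nf G x0 ∩ nf G x1 with hc
  have hZc : 2*(k'+1) - 1 ≤ c.card := by
    have : (2*(k'+1)+1) - 2 ≤ c.card := by
      apply card_ge_of_val_range h0n c 2 (2*(k'+1)+1) (by omega)
      intro i h2i hi2k hi'
      have hne0 : (⟨i, hi'⟩ : Fin n) ≠ x0 := by
        intro h
        have := congrArg Fin.val h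
        simp [hx0] at this
        omega
      refine Finset.mem_inter.mpr ⟨mem_nf.mpr (hGx0 _ hne0), mem_nf.mpr (hHG ⟨?_, ?_⟩)⟩
      · intro h
        have := congrArg Fin.val h
        simp [hx1] at this
        omega
      · exact Or.inr (Or.inr (Or.inl ⟨hx1v, by show 2 ≤ i; omega, by show i ≤ 2*(k'+1); omega⟩))
    omega
  set A1 := c ∩ nf (G \ R) x0 with hA1
  set A2 := c ∩ nf (G \ R) x1 with hA2
  set A3 := c ∩ (nf R x0 ∩ nf R x1) with hA3
  have hcover : c ⊆ (A1 ∪ A2) ∪ A3 := by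
    intro w hw
    have hw0 : G.Adj x0 w := mem_nf.mp (Finset.mem_inter.mp hw).1
    have hw1 : G.Adj x1 w := mem_nf.mp (Finset.mem_inter.mp hw).2
    simp only [hA1, hA2, hA3, Finset.mem_union, Finset.mem_inter, mem_nf, sdiff_adj]
    by_cases h0 : R.Adj x0 w
    · by_cases h1 : R.Adj x1 w
      · exact Or.inr ⟨hw, h0, h1⟩
      · exact Or.inl (Or.inr ⟨hw, hw1, h1⟩)
    · exact Or.inl (Or.inl ⟨hw, hw0, h0⟩)
  have hA1le : A1.card ≤ k' := le_trans (Finset.card_le_card (Finset.inter_subset_right)) (hBdeg x0)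
  have hA2le : A2.card ≤ k' := le_trans (Finset.card_le_card (Finset.inter_subset_right)) (hBdeg x1)
  have hA3le : A3.card ≤ 1 := le_trans (Finset.card_le_card Finset.inter_subset_right)
    (common_red_le_one R hC4 h01)
  have hcc := Finset.card_le_card hcover
  have hu := Finset.card_union_le (A1 ∪ A2) A3
  have hu12 := Finset.card_union_add_card_inter A1 A2
  -- A1 and A2 fill their blue neighbourhoods
  have hb0 := hBdeg x0
  have hb1 := hBdeg x1
  have hA1eq : A1 = nf (G \ R) x0 := by
    apply Finset.eq_of_subset_of_card_le (Finset.inter_subset_right)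
    rw [← hA1]
    omega
  have hA2eq : A2 = nf (G \ R) x1 := by
    apply Finset.eq_of_subset_of_card_le (Finset.inter_subset_right)
    rw [← hA2]
    omega
  have hA12empty : (A1 ∩ A2).card = 0 := by omega
  -- the hub edge is red
  have hx01R : R.Adj x0 x1 := by
    by_contra hnr
    have hmem : x1 ∈ nf (G \ R) x0 :=
      mem_nf.mpr ((G.sdiff_adj R x0 x1).mpr ⟨hGx0 x1 (Ne.symm h01), hnr⟩)
    rw [← hA1eq] at hmem
    have hx1c : x1 ∈ c := (Finset.mem_inter.mp hmem).1
    have : G.Adj x1 x1 := mem_nf.mp (Finset.mem_inter.mp hx1c).2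
    exact G.loopless.irrefl x1 this
  -- every non-hub vertex has a red edge to a hub
  have hanchor : ∀ v : Fin n, v ≠ x0 → v ≠ x1 → R.Adj x0 v ∨ R.Adj x1 v := by
    intro v hv0 hv1
    by_cases h0 : R.Adj x0 v
    · exact Or.inl h0
    have hvB : v ∈ nf (G \ R) x0 :=
      mem_nf.mpr ((G.sdiff_adj R x0 v).mpr ⟨hGx0 v hv0, h0⟩)
    have hvA1 : v ∈ A1 := by rw [hA1eq]; exact hvB
    have hvc : v ∈ c := (Finset.mem_inter.mp hvA1).1
    have hGx1v : G.Adj x1 v := mem_nf.mp (Finset.mem_inter.mp hvc).2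
    by_cases h1 : R.Adj x1 v
    · exact Or.inr h1
    exfalso
    have hvB2 : v ∈ nf (G \ R) x1 :=
      mem_nf.mpr ((G.sdiff_adj R x1 v).mpr ⟨hGx1v, h1⟩)
    have hvA2 : v ∈ A2 := by rw [hA2eq]; exact hvB2
    have hmem12 : v ∈ A1 ∩ A2 := Finset.mem_inter.mpr ⟨hvA1, hvA2⟩
    have hpos := Finset.card_pos.mpr ⟨v, hmem12⟩
    omega
  -- non-hub red edges form a matching
  have hL4 : ∀ v : Fin n, v ≠ x0 → v ≠ x1 → (nf R v \ {x0, x1}).card ≤ 1 := by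
    intro v hv0 hv1
    rw [Finset.card_le_one]
    intro a ha b hb
    by_contra hab
    rw [Finset.mem_sdiff] at ha hb
    obtain ⟨hva, ha2⟩ := ha
    obtain ⟨hvb, hb2⟩ := hb
    rw [mem_nf] at hva hvb
    simp only [Finset.mem_insert, Finset.mem_singleton, not_or] at ha2 hb2
    have shared : ∀ w : Fin n, w ≠ x0 → w ≠ x1 → R.Adj v w →
        ∃ h : Fin n, (h = x0 ∨ h = x1) ∧ R.Adj h v ∧ R.Adj h w := by
      intro w hw0 hw1 hvw
      rcases hanchor v hv0 hv1 with hv | hv <;> rcases hanchor w hw0 hw1 with hw | hw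
      · exact ⟨x0, Or.inl rfl, hv, hw⟩
      · by_cases hx0w : R.Adj x0 w
        · exact ⟨x0, Or.inl rfl, hv, hx0w⟩
        by_cases hx1v : R.Adj x1 v
        · exact ⟨x1, Or.inr rfl, hx1v, hw⟩
        exact absurd ⟨v, w, x1, x0, hvw.ne, hv1, hv0, hw1, hw0, Ne.symm h01,
          hvw, hw.symm, hx01R.symm, hv⟩ hC4
      · by_cases hx1w : R.Adj x1 w
        · exact ⟨x1, Or.inr rfl, hv, hx1w⟩
        by_cases hx0v : R.Adj x0 v
        · exact ⟨x0, Or.inl rfl, hx0v, hw⟩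
        exact absurd ⟨v, w, x0, x1, hvw.ne, hv0, hv1, hw0, hw1, h01,
          hvw, hw.symm, hx01R, hv⟩ hC4
      · exact ⟨x1, Or.inr rfl, hv, hw⟩
    obtain ⟨h, hh01, hhv, hha⟩ := shared a ha2.1 ha2.2 hva
    obtain ⟨h', hh01', hh'v, hh'b⟩ := shared b hb2.1 hb2.2 hvb
    by_cases hhh : h = h'
    · subst hhh
      have hah : a ≠ h := by rcases hh01 with rfl | rfl; exacts [ha2.1, ha2.2]
      have hvh : v ≠ h := by rcases hh01 with rfl | rfl; exacts [hv0, hv1]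
      have hbh : b ≠ h := by rcases hh01 with rfl | rfl; exacts [hb2.1, hb2.2]
      exact hC4 ⟨a, v, b, h, hva.ne', hab, hah, hvb.ne, hvh, hbh,
        hva.symm, hvb, hh'b.symm, hha⟩
    · have hah : a ≠ h := by rcases hh01 with rfl | rfl; exacts [ha2.1, ha2.2]
      have hah' : a ≠ h' := by rcases hh01' with rfl | rfl; exacts [ha2.1, ha2.2]
      have hvh : v ≠ h := by rcases hh01 with rfl | rfl; exacts [hv0, hv1]
      have hvh' : v ≠ h' := by rcases hh01' with rfl | rfl; exacts [hv0, hv1]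
      have hhh'R : R.Adj h h' := by
        rcases hh01 with rfl | rfl <;> rcases hh01' with rfl | rfl
        · exact absurd rfl hhh
        · exact hx01R
        · exact hx01R.symm
        · exact absurd rfl hhh
      exact hC4 ⟨a, h, h', v, hah, hah', hva.ne', hhh, Ne.symm hvh, Ne.symm hvh',
        hha.symm, hhh'R, hh'v, hva⟩
  -- degree counting
  set rest := (univ : Finset (Fin n)) \ {x0, x1} with hrest
  have hpair_card : ({x0, x1} : Finset (Fin n)).card = 2 := by
    rw [Finset.card_insert_of_notMem (by simpa using h01), Finset.card_singleton]
  have hrest_card : rest.card = n - 2 := by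
    rw [hrest, Finset.card_sdiff_of_subset (Finset.subset_univ _), Finset.card_univ, Fintype.card_fin,
      hpair_card]
  have hdecomp : ∀ f : Fin n → ℕ, ∑ v, f v = f x0 + f x1 + ∑ v ∈ rest, f v := by
    intro f
    have hx1rest : x1 ∉ rest := by simp [hrest]
    have hx0rest : x0 ∉ insert x1 rest := by simp [hrest, h01]
    have huniv : (univ : Finset (Fin n)) = insert x0 (insert x1 rest) := by
      ext v
      constructor
      · intro _
        rw [Finset.mem_insert, Finset.mem_insert]
        by_cases hv0 : v = x0
        · exact Or.inl hv0
        by_cases hv1 : v = x1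
        · exact Or.inr (Or.inl hv1)
        refine Or.inr (Or.inr ?_)
        rw [hrest, Finset.mem_sdiff]
        refine ⟨Finset.mem_univ v, ?_⟩
        rw [Finset.mem_insert, Finset.mem_singleton]
        push_neg
        exact ⟨hv0, hv1⟩
      · intro _
        exact Finset.mem_univ v
    rw [huniv, Finset.sum_insert hx0rest, Finset.sum_insert hx1rest]
    ring
  have hIx0 : nf R x0 ∩ ({x0, x1} : Finset (Fin n)) = {x1} := by
    ext w
    simp only [Finset.mem_inter, mem_nf, Finset.mem_insert, Finset.mem_singleton]
    constructor
    · rintro ⟨hadj, (rfl | rfl)⟩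
      · exact absurd hadj (R.loopless.irrefl x0)
      · rfl
    · rintro rfl
      exact ⟨hx01R, Or.inr rfl⟩
  have hIx1 : nf R x1 ∩ ({x0, x1} : Finset (Fin n)) = {x0} := by
    ext w
    simp only [Finset.mem_inter, mem_nf, Finset.mem_insert, Finset.mem_singleton]
    constructor
    · rintro ⟨hadj, (rfl | rfl)⟩
      · rfl
      · exact absurd hadj (R.loopless.irrefl x1)
    · rintro rfl
      exact ⟨hx01R.symm, Or.inl rfl⟩
  set s0 := (nf R x0 \ {x0, x1}).card with hs0
  set s1 := (nf R x1 \ {x0, x1}).card with hs1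
  have hds0 : (nf R x0).card = 1 + s0 := by
    have h := Finset.card_inter_add_card_sdiff (nf R x0) ({x0, x1} : Finset (Fin n))
    rw [hIx0, Finset.card_singleton] at h
    omega
  have hds1 : (nf R x1).card = 1 + s1 := by
    have h := Finset.card_inter_add_card_sdiff (nf R x1) ({x0, x1} : Finset (Fin n))
    rw [hIx1, Finset.card_singleton] at h
    omega
  have hRx01sum : (nf R x0).card + (nf R x1).card ≤ n + 1 := by
    have h1' := Finset.card_union_add_card_inter (nf R x0) (nf R x1)
    have h2' : (nf R x0 ∪ nf R x1).card ≤ n := by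
      refine le_trans (Finset.card_le_univ _) ?_
      simp
    have h3' := common_red_le_one R hC4 h01
    omega
  have hpt : ∀ v ∈ rest, (nf R v).card ≤ (nf R v ∩ ({x0, x1} : Finset (Fin n))).card + 1 := by
    intro v hv
    have hv' : v ≠ x0 ∧ v ≠ x1 := by
      rw [hrest, Finset.mem_sdiff, Finset.mem_insert, Finset.mem_singleton] at hv
      push_neg at hv
      exact hv.2
    have hL := hL4 v hv'.1 hv'.2
    have h := Finset.card_inter_add_card_sdiff (nf R v) ({x0, x1} : Finset (Fin n))
    omega
  have hrsum : ∑ v ∈ rest, (nf R v).card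
      ≤ (∑ v ∈ rest, (nf R v ∩ ({x0, x1} : Finset (Fin n))).card) + rest.card := by
    calc ∑ v ∈ rest, (nf R v).card
        ≤ ∑ v ∈ rest, ((nf R v ∩ ({x0, x1} : Finset (Fin n))).card + 1) :=
          Finset.sum_le_sum hpt
      _ = _ := by rw [Finset.sum_add_distrib, Finset.sum_const, smul_eq_mul, mul_one]
  have hsum_inter : ∑ v ∈ rest, (nf R v ∩ ({x0, x1} : Finset (Fin n))).card = s0 + s1 := by
    have hptc : ∀ v ∈ rest, (nf R v ∩ ({x0, x1} : Finset (Fin n))).card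
        = ((if R.Adj x0 v then 1 else 0) + (if R.Adj x1 v then 1 else 0)) := by
      intro v hv
      by_cases h0 : R.Adj x0 v <;> by_cases h1 : R.Adj x1 v
      · have hset : nf R v ∩ ({x0, x1} : Finset (Fin n)) = {x0, x1} := by
          ext w
          simp only [Finset.mem_inter, mem_nf, Finset.mem_insert, Finset.mem_singleton]
          constructor
          · exact fun h => h.2
          · rintro (rfl | rfl)
            · exact ⟨h0.symm, Or.inl rfl⟩
            · exact ⟨h1.symm, Or.inr rfl⟩
        rw [hset, hpair_card]
        simp [h0, h1]
      · have hset : nf R v ∩ ({x0, x1} : Finset (Fin n)) = {x0} := by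
          ext w
          simp only [Finset.mem_inter, mem_nf, Finset.mem_insert, Finset.mem_singleton]
          constructor
          · rintro ⟨hadj, (rfl | rfl)⟩
            · rfl
            · exact absurd hadj.symm h1
          · rintro rfl
            exact ⟨h0.symm, Or.inl rfl⟩
        rw [hset, Finset.card_singleton]
        simp [h0, h1]
      · have hset : nf R v ∩ ({x0, x1} : Finset (Fin n)) = {x1} := by
          ext w
          simp only [Finset.mem_inter, mem_nf, Finset.mem_insert, Finset.mem_singleton]
          constructor
          · rintro ⟨hadj, (rfl | rfl)⟩
            · exact absurd hadj.symm h0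
            · rfl
          · rintro rfl
            exact ⟨h1.symm, Or.inr rfl⟩
        rw [hset, Finset.card_singleton]
        simp [h0, h1]
      · have hset : nf R v ∩ ({x0, x1} : Finset (Fin n)) = ∅ := by
          apply Finset.eq_empty_iff_forall_notMem.mpr
          intro w hw
          rw [Finset.mem_inter, mem_nf] at hw
          obtain ⟨hadj, hw2⟩ := hw
          simp only [Finset.mem_insert, Finset.mem_singleton] at hw2
          rcases hw2 with rfl | rfl
          · exact h0 hadj.symm
          · exact h1 hadj.symm
        rw [hset]
        simp [h0, h1]
    rw [Finset.sum_congr rfl hptc, Finset.sum_add_distrib]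
    have e0 : (∑ v ∈ rest, if R.Adj x0 v then 1 else 0) = s0 := by
      rw [Finset.sum_boole]
      rw [hs0]
      norm_num
      congr 1
      ext w
      simp only [Finset.mem_filter, hrest, Finset.mem_sdiff, Finset.mem_univ, true_and,
        Finset.mem_insert, Finset.mem_singleton, mem_nf]
      tauto
    have e1 : (∑ v ∈ rest, if R.Adj x1 v then 1 else 0) = s1 := by
      rw [Finset.sum_boole]
      rw [hs1]
      norm_num
      congr 1
      ext w
      simp only [Finset.mem_filter, hrest, Finset.mem_sdiff, Finset.mem_univ, true_and,
        Finset.mem_insert, Finset.mem_singleton, mem_nf]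
      tauto
    rw [e0, e1]
  -- total red sum
  have hRdec := hdecomp (fun v => (nf R v).card)
  have hRsum : (∑ v, (nf R v).card) + 2 ≤ 3 * n := by
    omega
  -- blue sum
  have hBsum : ∑ v, (nf (G \ R) v).card ≤ n * k' := by
    calc ∑ v, (nf (G \ R) v).card ≤ (univ : Finset (Fin n)).card • k' :=
          Finset.sum_le_card_nsmul _ _ _ (fun v _ => hBdeg v)
      _ = n * k' := by simp [smul_eq_mul]
  -- combine
  have hGsum := sum_nf_card G
  have hRBsum : ∑ v, (nf G v).card = ∑ v, (nf R v).card + ∑ v, (nf (G \ R) v).card := by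
    rw [← Finset.sum_add_distrib]
    exact Finset.sum_congr rfl fun v _ => nf_split G R hRG v
  have hmul : (k' + 1 + 2) * n = n * k' + 3 * n := by ring
  omega

/-- The red subgraph of the canonical critical coloring of `Hgr`. -/
def R0 (n k : ℕ) : SimpleGraph (Fin n) where
  Adj a b := (Hgr n k).Adj a b ∧
    ¬ ((a.val = 0 ∧ k+1 ≤ b.val ∧ b.val ≤ 2*k - 1) ∨
       (b.val = 0 ∧ k+1 ≤ a.val ∧ a.val ≤ 2*k - 1) ∨
       (a.val = 1 ∧ 2 ≤ b.val ∧ b.val ≤ k) ∨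
       (b.val = 1 ∧ 2 ≤ a.val ∧ a.val ≤ k))
  symm := by
    constructor
    rintro a b ⟨h1, h2⟩
    refine ⟨h1.symm, ?_⟩
    tauto
  loopless := by
    constructor
    rintro a ⟨h, -⟩
    exact (Hgr n k).loopless.irrefl a h

lemma R0_le : R0 n k ≤ Hgr n k := by
  intro a b h
  exact h.1

lemma crit_H (hk : 3 ≤ k) (hn : 3 * k + 4 ≤ n) :
    CriticalColoring k (Hgr n k) (R0 n k) := by
  have h0n : (0:ℕ) < n := by omega
  have h1n : (1:ℕ) < n := by omega
  set x0 : Fin n := ⟨0, h0n⟩ with hx0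
  set x1 : Fin n := ⟨1, h1n⟩ with hx1
  have hx0v : x0.val = 0 := rfl
  have hx1v : x1.val = 1 := rfl
  have hubid : ∀ v : Fin n, v.val ≤ 1 → v = x0 ∨ v = x1 := by
    intro v hv
    by_cases h : v.val = 0
    · exact Or.inl (Fin.ext (by simpa using h))
    · exact Or.inr (Fin.ext (by simp [hx1v]; omega))
  refine ⟨R0_le, ?_, ?_⟩
  · -- no C4 in R0
    rintro ⟨a, b, c, d, hab, hac, had, hbc, hbd, hcd, h1, h2, h3, h4⟩
    have hedge : ∀ p q : Fin n, (R0 n k).Adj p q → 2 ≤ p.val → q.val ≤ 1 := by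
      rintro p q ⟨⟨hne, hcond⟩, -⟩ hp
      rcases hcond with h | h | h | h <;> omega
    have hcom : ∀ v : Fin n, (R0 n k).Adj x0 v → (R0 n k).Adj x1 v → v.val = 2*k := by
      rintro v ⟨⟨hne0, -⟩, hb0⟩ ⟨⟨hne1, hcond⟩, hb1⟩
      have hnb0 : ¬ (k+1 ≤ v.val ∧ v.val ≤ 2*k - 1) := fun hh => hb0 (Or.inl ⟨hx0v, hh⟩)
      have hnb1 : ¬ (2 ≤ v.val ∧ v.val ≤ k) := fun hh => hb1 (Or.inr (Or.inr (Or.inl ⟨hx1v, hh⟩)))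
      rcases hcond with h | h | h | h
      · rw [hx1v] at h; omega
      · exfalso
        apply hne0
        apply Fin.ext
        rw [hx0v, h]
      · obtain ⟨-, hv2, hv2k⟩ := h
        omega
      · rw [hx1v] at h; omega
    by_cases ha : a.val ≤ 1 <;> by_cases hc : c.val ≤ 1
    · rcases hubid a ha with rfl | rfl <;> rcases hubid c hc with rfl | rfl
      · exact hac rfl
      · have hb2k := hcom b h1 h2.symm
        have hd2k := hcom d h4.symm h3
        exact hbd (Fin.ext (by rw [hb2k, hd2k]))
      · have hb2k := hcom b h2.symm h1
        have hd2k := hcom d h3 h4.symm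
        exact hbd (Fin.ext (by rw [hb2k, hd2k]))
      · exact hac rfl
    · have hb' := hedge c b h2.symm (by omega)
      have hd' := hedge c d h3 (by omega)
      rcases hubid a ha with rfl | rfl <;> rcases hubid b hb' with rfl | rfl <;>
        rcases hubid d hd' with rfl | rfl <;>
        first
          | exact hab rfl
          | exact had rfl
          | exact hbd rfl
    · have hb' := hedge a b h1 (by omega)
      have hd' := hedge a d h4.symm (by omega)
      rcases hubid c hc with rfl | rfl <;> rcases hubid b hb' with rfl | rfl <;>
        rcases hubid d hd' with rfl | rfl <;>
        first
          | exact hbc rfl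
          | exact hcd rfl
          | exact hbd rfl
    · have hb' := hedge a b h1 (by omega)
      have hd' := hedge a d h4.symm (by omega)
      rcases hubid b hb' with rfl | rfl <;> rcases hubid d hd' with rfl | rfl
      · exact hbd rfl
      · have ha2k := hcom a h1.symm h4
        have hc2k := hcom c h2 h3.symm
        exact hac (Fin.ext (by rw [ha2k, hc2k]))
      · have ha2k := hcom a h4 h1.symm
        have hc2k := hcom c h3.symm h2
        exact hac (Fin.ext (by rw [ha2k, hc2k]))
      · exact hbd rfl
  · -- blue degrees
    intro v
    rw [ncard_nf]
    have hblue_adj : ∀ w : Fin n, (Hgr n k \ R0 n k).Adj v w →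
        ((Hgr n k).Adj v w ∧
          ((v.val = 0 ∧ k+1 ≤ w.val ∧ w.val ≤ 2*k - 1) ∨
           (w.val = 0 ∧ k+1 ≤ v.val ∧ v.val ≤ 2*k - 1) ∨
           (v.val = 1 ∧ 2 ≤ w.val ∧ w.val ≤ k) ∨
           (w.val = 1 ∧ 2 ≤ v.val ∧ v.val ≤ k))) := by
      intro w hvw
      rw [sdiff_adj] at hvw
      obtain ⟨hH, hnR⟩ := hvw
      refine ⟨hH, ?_⟩
      by_contra hb
      exact hnR ⟨hH, hb⟩
    by_cases hv0 : v.val = 0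
    · -- blue neighbours have values in [k+1, 2k-1]
      have hsub : ∀ w ∈ nf (Hgr n k \ R0 n k) v, k+1 ≤ w.val ∧ w.val < 2*k := by
        intro w hw
        obtain ⟨hH, hb⟩ := hblue_adj w (mem_nf.mp hw)
        rcases hb with h | h | h | h
        · omega
        · exfalso; apply hH.1; apply Fin.ext; omega
        · omega
        · omega
      have := card_le_of_val_range _ (k+1) (2*k) hsub
      omega
    by_cases hv1 : v.val = 1
    · have hsub : ∀ w ∈ nf (Hgr n k \ R0 n k) v, 2 ≤ w.val ∧ w.val < k+1 := by
        intro w hw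
        obtain ⟨hH, hb⟩ := hblue_adj w (mem_nf.mp hw)
        rcases hb with h | h | h | h
        · omega
        · omega
        · omega
        · exfalso; apply hH.1; apply Fin.ext; omega
      have := card_le_of_val_range _ 2 (k+1) hsub
      omega
    · -- non-hub: blue neighbours are hubs
      have hsub : nf (Hgr n k \ R0 n k) v ⊆ {x0, x1} := by
        intro w hw
        obtain ⟨hH, hb⟩ := hblue_adj w (mem_nf.mp hw)
        rw [Finset.mem_insert, Finset.mem_singleton]
        rcases hb with h | h | h | h
        · omega
        · exact Or.inl (Fin.ext (by rw [h.1, hx0v]))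
        · omega
        · exact Or.inr (Fin.ext (by rw [h.1, hx1v]))
      have hle := Finset.card_le_card hsub
      have h01 : x0 ≠ x1 := by
        intro h
        have := congrArg Fin.val h
        simp [hx0, hx1] at this
      have : ({x0, x1} : Finset (Fin n)).card = 2 := by
        rw [Finset.card_insert_of_notMem (by simpa using h01), Finset.card_singleton]
      omega
end Stmt17Aux

theorem stmt17 (k n : ℕ) (hk : 3 ≤ k) (hn : 3 * k + 4 ≤ n) :
    ∃ G : SimpleGraph (Fin n), CoCritical k G ∧
      (G.edgeSet.ncard : ℝ) ≤ ((k : ℝ) + 2) * n / 2 + k := by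
  classical
  set Hk := Stmt17Aux.Hgr n k with hHk
  have hHcol : ∃ R, CriticalColoring k Hk R := ⟨Stmt17Aux.R0 n k, Stmt17Aux.crit_H hk hn⟩
  have hbound : ∀ G : SimpleGraph (Fin n), Hk ≤ G → (∃ R, CriticalColoring k G R) →
      2 * G.edgeSet.ncard + 2 ≤ (k+2)*n := by
    rintro G h1 ⟨R, h2⟩
    exact Stmt17Aux.main_bound hk hn G h1 R h2
  set S : Finset ℕ := (Finset.range ((k+2)*n + 1)).filter
    (fun m => ∃ G : SimpleGraph (Fin n),
      (Hk ≤ G ∧ ∃ R, CriticalColoring k G R) ∧ G.edgeSet.ncard = m) with hS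
  have hSne : S.Nonempty := by
    refine ⟨Hk.edgeSet.ncard, ?_⟩
    refine Finset.mem_filter.mpr ⟨Finset.mem_range.mpr ?_, Hk, ⟨le_refl _, hHcol⟩, rfl⟩
    have := hbound Hk (le_refl _) hHcol
    omega
  obtain ⟨G, hGprop, hGcard⟩ : ∃ G : SimpleGraph (Fin n),
      (Hk ≤ G ∧ ∃ R, CriticalColoring k G R) ∧ G.edgeSet.ncard = S.max' hSne := by
    have h := S.max'_mem hSne
    exact (Finset.mem_filter.mp h).2
  obtain ⟨hHG, hGcol⟩ := hGprop
  refine ⟨G, ⟨?_, hGcol, ?_⟩, ?_⟩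
  · -- G ≠ ⊤
    intro htop
    exact Stmt17Aux.top_not_colorable hk hn (htop ▸ hGcol)
  · -- maximality
    intro u v huv hadj hcol'
    obtain ⟨R, hcrit⟩ := hcol'
    set G' := G ⊔ fromEdgeSet {s(u,v)} with hG'
    have hHG' : Hk ≤ G' := le_trans hHG le_sup_left
    have hmem' : G'.edgeSet.ncard ∈ S := by
      refine Finset.mem_filter.mpr ⟨Finset.mem_range.mpr ?_, G', ⟨hHG', R, hcrit⟩, rfl⟩
      have := hbound G' hHG' ⟨R, hcrit⟩
      omega
    have hle := S.le_max' _ hmem'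
    have hadjG' : G'.Adj u v := by
      rw [hG', sup_adj, fromEdgeSet_adj]
      exact Or.inr ⟨Set.mem_singleton _, huv⟩
    have hlt : G.edgeSet.ncard < G'.edgeSet.ncard := by
      apply Set.ncard_lt_ncard ?_ (Set.toFinite _)
      constructor
      · exact SimpleGraph.edgeSet_mono le_sup_left
      · intro hts
        have : s(u,v) ∈ G.edgeSet := hts ((SimpleGraph.mem_edgeSet G').mpr hadjG')
        exact hadj ((SimpleGraph.mem_edgeSet G).mp this)
    omega
  · -- the size bound
    have hb := hbound G hHG hGcol
    have hcast : 2 * (G.edgeSet.ncard : ℝ) ≤ ((k:ℝ) + 2) * n := by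
      have h2 : 2 * G.edgeSet.ncard ≤ (k+2)*n := by omega
      exact_mod_cast h2
    have hk0 : (0:ℝ) ≤ (k:ℝ) := Nat.cast_nonneg k
    linarith
end
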